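/- arXiv:1310.5675 — 5 statements merged into one kernel-verified Lean document; each statement's English description precedes it below -/
import Mathlib

section
/- The maximal area of a triangle inscribed in a closed disk of radius R in the plane is (3√3/4)·R², attained by an equilateral triangle inscribed in the boundary circle. -/
open Real MeasureTheory Metric

noncomputable section MaxAreaAux

open Set Pointwise

namespace MaxAreaAux

abbrev E2 := EuclideanSpace ℝ (Fin 2)

/-- The standard closed triangle in `ℝ × ℝ`. -/
def A : Set (ℝ × ℝ) := {p | 0 ≤ p.1 ∧ 0 ≤ p.2 ∧ p.1 + p.2 ≤ 1}

lemma volume_A : volume A = ENNReal.ofReal (1/2) := by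
  have hreg : regionBetween (fun _ => (0:ℝ)) (fun x => 1 - x) (Icc 0 1) ⊆ A := by
    rintro ⟨p1, p2⟩ hp
    simp only [regionBetween, mem_setOf_eq, mem_Ioo, mem_Icc] at hp
    exact ⟨hp.1.1, hp.2.1.le, by linarith [hp.2.2]⟩
  have hA_sub : A ⊆ regionBetween (fun _ => (0:ℝ)) (fun x => 1 - x) (Icc 0 1)
      ∪ ((univ : Set ℝ) ×ˢ {(0:ℝ)}) ∪ {p : ℝ × ℝ | p.1 + p.2 = 1} := by
    rintro ⟨p1, p2⟩ ⟨h1, h2, h3⟩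
    rcases eq_or_lt_of_le h2 with h2' | h2'
    · exact Or.inl (Or.inr ⟨trivial, h2'.symm⟩)
    rcases eq_or_lt_of_le h3 with h3' | h3'
    · exact Or.inr h3'
    · refine Or.inl (Or.inl ?_)
      simp only [regionBetween, mem_setOf_eq, mem_Ioo, mem_Icc]
      refine ⟨⟨h1, by linarith⟩, h2', by linarith⟩
  have hline : volume {p : ℝ × ℝ | p.1 + p.2 = 1} = 0 := by
    have hconv : Convex ℝ {p : ℝ × ℝ | p.1 + p.2 = 1} := by
      intro p hp q hq a b ha hb hab
      simp only [mem_setOf_eq] at *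
      simp only [Prod.fst_add, Prod.snd_add, Prod.smul_fst, Prod.smul_snd, smul_eq_mul]
      nlinarith [hp, hq]
    have hclosed : IsClosed {p : ℝ × ℝ | p.1 + p.2 = 1} :=
      isClosed_eq (by fun_prop) continuous_const
    have hint : interior {p : ℝ × ℝ | p.1 + p.2 = 1} = ∅ := by
      by_contra h
      obtain ⟨q, hq⟩ := nonempty_iff_ne_empty.2 h
      obtain ⟨ε, hε, hball⟩ := Metric.isOpen_iff.1 isOpen_interior q hq
      have h1 : q ∈ {p : ℝ × ℝ | p.1 + p.2 = 1} := interior_subset hq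
      have h2 : (q.1 + ε/2, q.2) ∈ {p : ℝ × ℝ | p.1 + p.2 = 1} := by
        apply interior_subset; apply hball
        rw [mem_ball, Prod.dist_eq]
        have : dist (q.1 + ε/2) q.1 = ε/2 := by
          rw [Real.dist_eq]; rw [abs_of_nonneg (by linarith)]; ring
        rw [this, dist_self]
        rw [max_eq_left (by linarith)]
        linarith
      simp only [mem_setOf_eq] at h1 h2
      linarith
    have := hconv.addHaar_frontier (volume : Measure (ℝ × ℝ))
    rwa [frontier, hint, diff_empty, hclosed.closure_eq] at this
  have hhor : volume ((univ : Set ℝ) ×ˢ {(0:ℝ)}) = 0 := by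
    rw [Measure.volume_eq_prod, Measure.prod_prod]
    simp
  have hregvol : volume (regionBetween (fun _ => (0:ℝ)) (fun x => 1 - x) (Icc 0 1))
      = ENNReal.ofReal (1/2) := by
    rw [Measure.volume_eq_prod]
    have hint0 : IntegrableOn (fun _ : ℝ => (0:ℝ)) (Icc 0 1) volume :=
      continuous_const.integrableOn_Icc
    have hint1 : IntegrableOn (fun x : ℝ => 1 - x) (Icc 0 1) volume :=
      (by continuity : Continuous (fun x : ℝ => 1 - x)).integrableOn_Icc
    rw [volume_regionBetween_eq_integral hint0 hint1 measurableSet_Icc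
      (by intro x hx; simp only [mem_Icc] at hx; linarith [hx.2])]
    simp only [Pi.sub_apply, sub_zero]
    congr 1
    rw [integral_Icc_eq_integral_Ioc, ← intervalIntegral.integral_of_le zero_le_one]
    rw [intervalIntegral.integral_sub intervalIntegrable_const intervalIntegral.intervalIntegrable_id]
    simp [integral_id]
    norm_num
  refine le_antisymm ?_ ?_
  · calc volume A ≤ volume (regionBetween (fun _ => (0:ℝ)) (fun x => 1 - x) (Icc 0 1)
        ∪ ((univ : Set ℝ) ×ˢ {(0:ℝ)}) ∪ {p : ℝ × ℝ | p.1 + p.2 = 1}) := measure_mono hA_sub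
    _ ≤ _ := by
        refine le_trans (measure_union_le _ _) ?_
        rw [hline, add_zero]
        refine le_trans (measure_union_le _ _) ?_
        rw [hhor, add_zero, hregvol]
  · rw [← hregvol]; exact measure_mono hreg

/-- The standard closed triangle in the Euclidean plane. -/
def T : Set E2 := {v | 0 ≤ v 0 ∧ 0 ≤ v 1 ∧ v 0 + v 1 ≤ 1}

lemma volume_T : volume T = ENNReal.ofReal (1/2) := by
  have hAmeas : MeasurableSet A := by
    have : IsClosed A := by
      refine IsClosed.inter ?_ (IsClosed.inter ?_ ?_)
      · exact isClosed_le continuous_const continuous_fst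
      · exact isClosed_le continuous_const continuous_snd
      · exact isClosed_le (continuous_fst.add continuous_snd) continuous_const
    exact this.measurableSet
  have h2 := (volume_preserving_finTwoArrow ℝ).measure_preimage hAmeas.nullMeasurableSet
  have h1 := (EuclideanSpace.volume_preserving_symm_measurableEquiv_toLp (Fin 2)).measure_preimage
    ((MeasurableEquiv.finTwoArrow.measurable hAmeas).nullMeasurableSet)
  have hpre2 : (MeasurableEquiv.finTwoArrow ⁻¹' A : Set (Fin 2 → ℝ))
      = {v : Fin 2 → ℝ | 0 ≤ v 0 ∧ 0 ≤ v 1 ∧ v 0 + v 1 ≤ 1} := by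
    ext v; rfl
  have hpre1 : ((MeasurableEquiv.toLp 2 (Fin 2 → ℝ)).symm ⁻¹'
      {v : Fin 2 → ℝ | 0 ≤ v 0 ∧ 0 ≤ v 1 ∧ v 0 + v 1 ≤ 1}) = T := by
    ext v; rfl
  rw [hpre2] at h1 h2
  rw [hpre1] at h1
  rw [h1, h2, volume_A]

/-- A point of the Euclidean plane with given coordinates. -/
def ept (a b : ℝ) : E2 := (WithLp.equiv 2 (Fin 2 → ℝ)).symm ![a, b]

@[simp] lemma ept_apply0 (a b : ℝ) : ept a b 0 = a := rfl
@[simp] lemma ept_apply1 (a b : ℝ) : ept a b 1 = b := rfl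

lemma hull_eq_T : convexHull ℝ ({0, ept 1 0, ept 0 1} : Set E2) = T := by
  apply le_antisymm
  · apply convexHull_min
    · rintro v (rfl | rfl | rfl)
      · exact ⟨le_refl 0, le_refl 0, by norm_num⟩
      · exact ⟨by norm_num, by norm_num, by norm_num⟩
      · exact ⟨by norm_num, by norm_num, by norm_num⟩
    · intro p hp q hq a b ha hb hab
      have h0 : (a • p + b • q) 0 = a * p 0 + b * q 0 := rfl
      have h1 : (a • p + b • q) 1 = a * p 1 + b * q 1 := rfl
      refine ⟨by rw [h0]; nlinarith [hp.1, hq.1], by rw [h1]; nlinarith [hp.2.1, hq.2.1],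
        by rw [h0, h1]; nlinarith [hp.2.2, hq.2.2]⟩
  · intro v hv
    obtain ⟨h0, h1, hs⟩ := hv
    have hmem := Finset.centerMass_mem_convexHull (Finset.univ : Finset (Fin 3))
      (w := ![1 - v 0 - v 1, v 0, v 1]) (z := ![0, ept 1 0, ept 0 1])
      (by intro i _; fin_cases i <;> simp <;> linarith)
      (by simp [Fin.sum_univ_three]; linarith)
      (s := ({0, ept 1 0, ept 0 1} : Set E2))
      (by intro i _; fin_cases i <;> simp [Set.mem_insert_iff])
    convert hmem using 1
    rw [Finset.centerMass]
    have hsum : (∑ i, (![1 - v 0 - v 1, v 0, v 1] : Fin 3 → ℝ) i) = 1 := by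
      simp [Fin.sum_univ_three]; ring
    rw [hsum, inv_one, one_smul]
    ext i
    rw [Fin.sum_univ_three]
    fin_cases i <;>
      simp [PiLp.add_apply, PiLp.smul_apply, ept] <;> ring

/-- The linear map sending `e₀ ↦ u`, `e₁ ↦ v`. -/
def lmap (u v : E2) : E2 →ₗ[ℝ] E2 where
  toFun p := p 0 • u + p 1 • v
  map_add' a b := by
    show ((a + b) 0) • u + ((a + b) 1) • v = (a 0 • u + a 1 • v) + (b 0 • u + b 1 • v)
    have h0 : (a + b) 0 = a 0 + b 0 := rfl
    have h1 : (a + b) 1 = a 1 + b 1 := rfl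
    rw [h0, h1, add_smul, add_smul]; abel
  map_smul' c a := by
    show ((c • a) 0) • u + ((c • a) 1) • v = c • (a 0 • u + a 1 • v)
    have h0 : (c • a) 0 = c * a 0 := rfl
    have h1 : (c • a) 1 = c * a 1 := rfl
    rw [h0, h1, smul_add, smul_smul, smul_smul]

lemma lmap_det (u v : E2) : LinearMap.det (lmap u v) = u 0 * v 1 - u 1 * v 0 := by
  rw [← LinearMap.det_toMatrix (PiLp.basisFun 2 ℝ (Fin 2)), Matrix.det_fin_two]
  simp [LinearMap.toMatrix_apply, lmap, PiLp.basisFun_apply, PiLp.basisFun_repr,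
    PiLp.add_apply, PiLp.smul_apply, PiLp.toLp_apply, Pi.single_apply]
  ring

/-- The area of a triangle, computed from the coordinates of its vertices. -/
theorem volume_triangle (x y w : E2) :
    volume (convexHull ℝ ({x, y, w} : Set E2))
      = ENNReal.ofReal (|(y 0 - x 0) * (w 1 - x 1) - (y 1 - x 1) * (w 0 - x 0)| / 2) := by
  set u := y - x
  set v := w - x
  set L := lmap u v
  have haff : (fun p => L p + x) '' ({0, ept 1 0, ept 0 1} : Set E2) = {x, y, w} := by
    rw [Set.image_insert_eq, Set.image_insert_eq, Set.image_singleton]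
    have e0 : L 0 + x = x := by simp
    have e1 : L (ept 1 0) + x = y := by
      show ((1:ℝ) • u + (0:ℝ) • v) + x = y
      simp [u]
    have e2 : L (ept 0 1) + x = w := by
      show ((0:ℝ) • u + (1:ℝ) • v) + x = w
      simp [v]
    rw [e0, e1, e2]
  have himg : convexHull ℝ ({x, y, w} : Set E2) = x +ᵥ (L '' T) := by
    rw [← haff, ← hull_eq_T]
    have hvadd : (fun p => L p + x) '' ({0, ept 1 0, ept 0 1} : Set E2)
        = x +ᵥ (L '' ({0, ept 1 0, ept 0 1} : Set E2)) := by
      rw [← Set.image_vadd, Set.image_image]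
      simp only [vadd_eq_add]
      exact Set.image_congr (fun p _ => add_comm (L p) x)
    rw [hvadd, convexHull_vadd, L.image_convexHull]
  rw [himg, measure_vadd, Measure.addHaar_image_linearMap, volume_T, lmap_det]
  rw [← ENNReal.ofReal_mul (abs_nonneg _)]
  congr 1
  have hu0 : u 0 = y 0 - x 0 := rfl
  have hu1 : u 1 = y 1 - x 1 := rfl
  have hv0 : v 0 = w 0 - x 0 := rfl
  have hv1 : v 1 = w 1 - x 1 := rfl
  rw [hu0, hu1, hv0, hv1]; ring

lemma one_side (R a0 a1 b0 b1 c0 c1 : ℝ)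
    (ha : a0^2 + a1^2 ≤ R^2) (hb : b0^2 + b1^2 ≤ R^2) (hc : c0^2 + c1^2 ≤ R^2) :
    (b0 - a0) * (c1 - a1) - (b1 - a1) * (c0 - a0) ≤ 3 * Real.sqrt 3 / 2 * R^2 := by
  set s := Real.sqrt 3 with hsdef
  have hs : s^2 = 3 := Real.sq_sqrt (by norm_num)
  have hspos : 0 < s := Real.sqrt_pos.2 (by norm_num)
  have step1 : s * ((b0 - a0) * (c1 - a1) - (b1 - a1) * (c0 - a0))
      ≤ ((a0-b0)^2+(a1-b1)^2+(b0-c0)^2+(b1-c1)^2+(c0-a0)^2+(c1-a1)^2) / 2 := by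
    nlinarith [sq_nonneg ((b0-a0) - (c0-a0)/2 - s/2*(c1-a1)),
      sq_nonneg ((b1-a1) + s/2*(c0-a0) - (c1-a1)/2), hs]
  have step2 : (a0-b0)^2+(a1-b1)^2+(b0-c0)^2+(b1-c1)^2+(c0-a0)^2+(c1-a1)^2 ≤ 9 * R^2 := by
    nlinarith [sq_nonneg (a0+b0+c0), sq_nonneg (a1+b1+c1)]
  have step3 : s * ((b0 - a0) * (c1 - a1) - (b1 - a1) * (c0 - a0)) ≤ s * (3 * s / 2 * R^2) := by
    have : s * (3 * s / 2 * R^2) = 3/2 * s^2 * R^2 := by ring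
    rw [this, hs]; linarith
  exact le_of_mul_le_mul_left step3 hspos

lemma key_ineq (R a0 a1 b0 b1 c0 c1 : ℝ)
    (ha : a0^2 + a1^2 ≤ R^2) (hb : b0^2 + b1^2 ≤ R^2) (hc : c0^2 + c1^2 ≤ R^2) :
    |(b0 - a0) * (c1 - a1) - (b1 - a1) * (c0 - a0)| / 2 ≤ 3 * Real.sqrt 3 / 4 * R^2 := by
  rw [div_le_iff₀ (by norm_num : (0:ℝ) < 2)]
  have h1 := one_side R a0 a1 b0 b1 c0 c1 ha hb hc
  have h2 := one_side R a0 a1 c0 c1 b0 b1 ha hc hb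
  have heq : 3 * Real.sqrt 3 / 4 * R ^ 2 * 2 = 3 * Real.sqrt 3 / 2 * R^2 := by ring
  rw [heq, abs_le]
  constructor <;> nlinarith [h1, h2]

lemma dist_formula (p q : E2) :
    dist p q = Real.sqrt ((p 0 - q 0)^2 + (p 1 - q 1)^2) := by
  rw [EuclideanSpace.dist_eq]
  congr 1
  rw [Fin.sum_univ_two]
  simp [Real.dist_eq, sq_abs]

lemma pt_apply0 (z : E2) (R a b : ℝ) : (z + R • ept a b) 0 = z 0 + R * a := rfl
lemma pt_apply1 (z : E2) (R a b : ℝ) : (z + R • ept a b) 1 = z 1 + R * b := rfl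

end MaxAreaAux

end MaxAreaAux

open MaxAreaAux in
/-- The maximal area of a triangle inscribed in a closed disk of radius `R` in the plane
is `(3√3/4)·R²`, attained by an equilateral triangle inscribed in the boundary circle. -/
theorem max_area_triangle_in_disk (R : ℝ) (hR : 0 < R)
    (z : EuclideanSpace ℝ (Fin 2)) :
    IsGreatest {a : ℝ | ∃ x y w : EuclideanSpace ℝ (Fin 2),
        x ∈ closedBall z R ∧ y ∈ closedBall z R ∧ w ∈ closedBall z R ∧
        a = (volume (convexHull ℝ ({x, y, w} : Set (EuclideanSpace ℝ (Fin 2))))).toReal}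
      (3 * Real.sqrt 3 / 4 * R ^ 2) ∧
    ∃ x y w : EuclideanSpace ℝ (Fin 2),
      x ∈ sphere z R ∧ y ∈ sphere z R ∧ w ∈ sphere z R ∧
      dist x y = dist y w ∧ dist y w = dist w x ∧
      (volume (convexHull ℝ ({x, y, w} : Set (EuclideanSpace ℝ (Fin 2))))).toReal
        = 3 * Real.sqrt 3 / 4 * R ^ 2 := by
  set s := Real.sqrt 3 with hsdef
  have hs : s^2 = 3 := Real.sq_sqrt (by norm_num)
  have hspos : 0 < s := Real.sqrt_pos.2 (by norm_num)
  -- the witness equilateral triangle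
  set X : EuclideanSpace ℝ (Fin 2) := z + R • ept 1 0 with hXdef
  set Y : EuclideanSpace ℝ (Fin 2) := z + R • ept (-(1/2)) (s/2) with hYdef
  set W : EuclideanSpace ℝ (Fin 2) := z + R • ept (-(1/2)) (-(s/2)) with hWdef
  have hXs : X ∈ sphere z R := by
    rw [mem_sphere, dist_formula]
    simp only [hXdef, hYdef, hWdef, pt_apply0, pt_apply1]
    rw [show (z 0 + R * 1 - z 0)^2 + (z 1 + R * 0 - z 1)^2 = R^2 by ring]
    exact Real.sqrt_sq hR.le
  have hYs : Y ∈ sphere z R := by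
    rw [mem_sphere, dist_formula]
    simp only [hXdef, hYdef, hWdef, pt_apply0, pt_apply1]
    rw [show (z 0 + R * -(1/2) - z 0)^2 + (z 1 + R * (s/2) - z 1)^2
        = R^2/4 + R^2/4*s^2 by ring, hs]
    rw [show R^2/4 + R^2/4*3 = R^2 by ring]
    exact Real.sqrt_sq hR.le
  have hWs : W ∈ sphere z R := by
    rw [mem_sphere, dist_formula]
    simp only [hXdef, hYdef, hWdef, pt_apply0, pt_apply1]
    rw [show (z 0 + R * -(1/2) - z 0)^2 + (z 1 + R * -(s/2) - z 1)^2
        = R^2/4 + R^2/4*s^2 by ring, hs]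
    rw [show R^2/4 + R^2/4*3 = R^2 by ring]
    exact Real.sqrt_sq hR.le
  have hXY : dist X Y = Real.sqrt (3 * R^2) := by
    rw [dist_formula]
    simp only [hXdef, hYdef, hWdef, pt_apply0, pt_apply1]
    congr 1
    rw [show (z 0 + R * 1 - (z 0 + R * -(1/2)))^2 + (z 1 + R * 0 - (z 1 + R * (s/2)))^2
      = 9*R^2/4 + R^2/4*s^2 by ring, hs]
    ring
  have hYW : dist Y W = Real.sqrt (3 * R^2) := by
    rw [dist_formula]
    simp only [hXdef, hYdef, hWdef, pt_apply0, pt_apply1]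
    congr 1
    rw [show (z 0 + R * -(1/2) - (z 0 + R * -(1/2)))^2 + (z 1 + R * (s/2) - (z 1 + R * -(s/2)))^2
      = R^2*s^2 by ring, hs]
    ring
  have hWX : dist W X = Real.sqrt (3 * R^2) := by
    rw [dist_formula]
    simp only [hXdef, hYdef, hWdef, pt_apply0, pt_apply1]
    congr 1
    rw [show (z 0 + R * -(1/2) - (z 0 + R * 1))^2 + (z 1 + R * -(s/2) - (z 1 + R * 0))^2
      = 9*R^2/4 + R^2/4*s^2 by ring, hs]
    ring
  have harea : (volume (convexHull ℝ
      ({X, Y, W} : Set (EuclideanSpace ℝ (Fin 2))))).toReal = 3 * s / 4 * R ^ 2 := by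
    rw [volume_triangle, ENNReal.toReal_ofReal (by positivity)]
    simp only [hXdef, hYdef, hWdef, pt_apply0, pt_apply1]
    rw [show (z 0 + R * -(1/2) - (z 0 + R * 1)) * (z 1 + R * -(s/2) - (z 1 + R * 0))
        - (z 1 + R * (s/2) - (z 1 + R * 0)) * (z 0 + R * -(1/2) - (z 0 + R * 1))
        = 3 * s * R^2 / 2 by ring]
    rw [abs_of_nonneg (by positivity)]
    ring
  constructor
  · constructor
    · exact ⟨X, Y, W, sphere_subset_closedBall hXs, sphere_subset_closedBall hYs,
        sphere_subset_closedBall hWs, harea.symm⟩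
    · rintro a ⟨x, y, w, hx, hy, hw, rfl⟩
      rw [volume_triangle, ENNReal.toReal_ofReal (by positivity)]
      have hsq : ∀ p : EuclideanSpace ℝ (Fin 2), p ∈ closedBall z R →
          (p 0 - z 0)^2 + (p 1 - z 1)^2 ≤ R^2 := by
        intro p hp
        rw [mem_closedBall, dist_formula] at hp
        have hnn : 0 ≤ (p 0 - z 0)^2 + (p 1 - z 1)^2 := by positivity
        have h' := pow_le_pow_left₀ (Real.sqrt_nonneg _) hp 2
        rwa [Real.sq_sqrt hnn] at h'
      have hkey := key_ineq R (x 0 - z 0) (x 1 - z 1) (y 0 - z 0) (y 1 - z 1)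
        (w 0 - z 0) (w 1 - z 1) (hsq x hx) (hsq y hy) (hsq w hw)
      rw [show (y 0 - z 0 - (x 0 - z 0)) * (w 1 - z 1 - (x 1 - z 1))
          - (y 1 - z 1 - (x 1 - z 1)) * (w 0 - z 0 - (x 0 - z 0))
          = (y 0 - x 0) * (w 1 - x 1) - (y 1 - x 1) * (w 0 - x 0) by ring] at hkey
      exact hkey
  · exact ⟨X, Y, W, hXs, hYs, hWs, hXY.trans hYW.symm, hYW.trans hWX.symm, harea⟩
end

section
/- Let 2π/3 ≤ θ ≤ π, let B be the unit disk and H⁻ a closed half-plane whose boundary line cuts B in a chord subtending central angle θ at the center, with the center of B in H⁻. Then the maximal area of a triangle with vertices in B ∩ H⁻ is sin(θ/2) + (1/2)·sin θ, attained by an isosceles triangle inscribed in the circle with central angles π − θ/2, π − θ/2, θ. -/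
open Real MeasureTheory Metric
open scoped RealInnerProductSpace


lemma K_nonneg {c1 c2 : ℝ} (h0 : -(1/2) ≤ c1) (h12 : c1 ≤ c2) (h2 : c2 ≤ 1) :
    0 ≤ 2 - 2*(c1^2 + c1*c2 + c2^2) + (c1 + c2)*(c1^2 + c2^2) := by
  nlinarith [mul_nonneg (mul_nonneg (by linarith : (0:ℝ) ≤ c1 + 1/2) (by linarith : (0:ℝ) ≤ 1 - c1)) (by linarith : (0:ℝ) ≤ 1 - c1),
    mul_nonneg (mul_nonneg (by linarith : (0:ℝ) ≤ c2 + 1/2) (by linarith : (0:ℝ) ≤ 1 - c2)) (by linarith : (0:ℝ) ≤ 1 - c2),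
    mul_nonneg (mul_nonneg (by linarith : (0:ℝ) ≤ c2 - c1) (by linarith : (0:ℝ) ≤ 1 - c2)) (by linarith : (0:ℝ) ≤ 1 - c1),
    sq_nonneg (c2 - c1), sq_nonneg (c1 + c2), sq_nonneg (1 - c1), sq_nonneg (1 - c2)]

lemma cubic_ineq {c1 c2 : ℝ} (h0 : -(1/2) ≤ c1) (h12 : c1 ≤ c2) (h2 : c2 ≤ 1) :
    (1 - c2)^2 * (1 - c2^2) ≤ (1 - c1)^2 * (1 - c1^2) := by
  have hK := K_nonneg h0 h12 h2
  nlinarith [mul_nonneg (by linarith : (0:ℝ) ≤ c2 - c1) hK]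

lemma F_mono {σ σ0 : ℝ} (h0 : 0 ≤ σ) (h : σ ≤ σ0) (h1 : σ0 ≤ 2 * π / 3) :
    (1 - Real.cos σ) * Real.sin σ ≤ (1 - Real.cos σ0) * Real.sin σ0 := by
  have hπ : σ0 ≤ π := h1.trans (by nlinarith [pi_pos])
  have hs : Real.sin σ = Real.sqrt (1 - Real.cos σ ^ 2) :=
    Real.sin_eq_sqrt_one_sub_cos_sq h0 (h.trans hπ)
  have hs0 : Real.sin σ0 = Real.sqrt (1 - Real.cos σ0 ^ 2) :=
    Real.sin_eq_sqrt_one_sub_cos_sq (h0.trans h) hπ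
  have hc1 : Real.cos σ0 ≤ Real.cos σ := Real.cos_le_cos_of_nonneg_of_le_pi h0 hπ h
  have hcl : -(1/2) ≤ Real.cos σ0 := by
    have h23 : Real.cos (2 * π / 3) ≤ Real.cos σ0 :=
      Real.cos_le_cos_of_nonneg_of_le_pi (h0.trans h) (by linarith [pi_pos]) h1
    rw [show (2:ℝ) * π / 3 = π - π/3 by ring, Real.cos_pi_sub, Real.cos_pi_div_three] at h23
    linarith
  have hcu : Real.cos σ ≤ 1 := Real.cos_le_one σ
  have key := cubic_ineq hcl hc1 hcu
  calc (1 - Real.cos σ) * Real.sin σ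
      = Real.sqrt ((1 - Real.cos σ)^2 * (1 - Real.cos σ ^ 2)) := by
        rw [Real.sqrt_mul (sq_nonneg _), Real.sqrt_sq (by linarith [Real.cos_le_one σ]), hs]
    _ ≤ Real.sqrt ((1 - Real.cos σ0)^2 * (1 - Real.cos σ0 ^ 2)) := Real.sqrt_le_sqrt key
    _ = (1 - Real.cos σ0) * Real.sin σ0 := by
        rw [Real.sqrt_mul (sq_nonneg _), Real.sqrt_sq (by linarith [Real.cos_le_one σ0]), hs0]

lemma sorted_bound {θ a b : ℝ} (hθ1 : 2 * π / 3 ≤ θ) (hθ2 : θ ≤ π)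
    (ha : 0 ≤ a) (hb : 0 ≤ b) (hab : a + b ≤ 2 * π - θ) :
    0 ≤ Real.sin a + Real.sin b - Real.sin (a + b) ∧
    Real.sin a + Real.sin b - Real.sin (a + b)
      ≤ 2 * (Real.sin (θ/2) * (1 + Real.cos (θ/2))) := by
  have hπ := pi_pos
  obtain ⟨x, rfl⟩ : ∃ x, a = 2*x := ⟨a/2, by ring⟩
  obtain ⟨y, rfl⟩ : ∃ y, b = 2*y := ⟨b/2, by ring⟩
  have hx : 0 ≤ x := by linarith
  have hy : 0 ≤ y := by linarith
  have hE : Real.sin (2*x) + Real.sin (2*y) - Real.sin (2*x + 2*y)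
      = 2 * Real.sin (x + y) * (Real.cos (x - y) - Real.cos (x + y)) := by
    rw [show 2*x = (x+y)+(x-y) by ring, show 2*y = (x+y)-(x-y) by ring,
      show ((x+y)+(x-y)) + ((x+y)-(x-y)) = (x+y)+(x+y) by ring,
      Real.sin_add (x+y) (x-y), Real.sin_sub (x+y) (x-y), Real.sin_add (x+y) (x+y)]
    ring
  have hσ0 : (0:ℝ) ≤ x + y := by linarith
  have hσπ : x + y ≤ π - θ/2 := by linarith
  have hσ23 : x + y ≤ 2 * π / 3 := by linarith
  have hsσ : 0 ≤ Real.sin (x + y) := Real.sin_nonneg_of_nonneg_of_le_pi hσ0 (by linarith)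
  have hcc : Real.cos (x + y) ≤ Real.cos (x - y) := by
    rw [← Real.cos_abs (x - y)]
    apply Real.cos_le_cos_of_nonneg_of_le_pi (abs_nonneg _) (by linarith)
    rw [abs_le]; constructor <;> linarith
  constructor
  · rw [hE]; nlinarith [mul_nonneg hsσ (sub_nonneg.2 hcc)]
  · rw [hE]
    have h1 : Real.cos (x - y) ≤ 1 := Real.cos_le_one _
    have step1 : 2 * Real.sin (x + y) * (Real.cos (x - y) - Real.cos (x + y))
        ≤ 2 * ((1 - Real.cos (x + y)) * Real.sin (x + y)) := by nlinarith
    have step2 : (1 - Real.cos (x + y)) * Real.sin (x + y)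
        ≤ (1 - Real.cos (π - θ/2)) * Real.sin (π - θ/2) :=
      F_mono hσ0 hσπ (by linarith)
    rw [Real.cos_pi_sub, Real.sin_pi_sub] at step2
    linarith

lemma absD_sorted {θ : ℝ} (hθ1 : 2 * π / 3 ≤ θ) (hθ2 : θ ≤ π) {t1 t2 t3 : ℝ}
    (h12 : t1 ≤ t2) (h23 : t2 ≤ t3) (hl : θ/2 ≤ t1) (hu : t3 ≤ 2*π - θ/2) :
    |Real.sin (t2-t1) + Real.sin (t3-t2) + Real.sin (t1-t3)|
      ≤ 2 * (Real.sin (θ/2) * (1 + Real.cos (θ/2))) := by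
  obtain ⟨h0, h1⟩ := sorted_bound (a := t2-t1) (b := t3-t2) hθ1 hθ2
    (by linarith) (by linarith) (by linarith)
  rw [show t1 - t3 = -((t2-t1) + (t3-t2)) by ring, Real.sin_neg, abs_le]
  constructor <;> linarith

lemma absD {θ : ℝ} (hθ1 : 2 * π / 3 ≤ θ) (hθ2 : θ ≤ π) {t1 t2 t3 : ℝ}
    (h1 : t1 ∈ Set.Icc (θ/2) (2*π - θ/2)) (h2 : t2 ∈ Set.Icc (θ/2) (2*π - θ/2))
    (h3 : t3 ∈ Set.Icc (θ/2) (2*π - θ/2)) :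
    |Real.sin (t2-t1) + Real.sin (t3-t2) + Real.sin (t1-t3)|
      ≤ 2 * (Real.sin (θ/2) * (1 + Real.cos (θ/2))) := by
  obtain ⟨h1l, h1u⟩ := h1
  obtain ⟨h2l, h2u⟩ := h2
  obtain ⟨h3l, h3u⟩ := h3
  have ssym : ∀ p q : ℝ, Real.sin (p - q) = -Real.sin (q - p) := fun p q => by
    rw [show p - q = -(q - p) by ring, Real.sin_neg]
  rcases le_total t1 t2 with a12 | a21 <;> rcases le_total t2 t3 with a23 | a32 <;>
    rcases le_total t1 t3 with a13 | a31
  · exact absD_sorted hθ1 hθ2 a12 a23 h1l h3u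
  · exact absD_sorted hθ1 hθ2 a12 a23 h1l h3u
  · -- t1 ≤ t3 ≤ t2
    have e : Real.sin (t2-t1) + Real.sin (t3-t2) + Real.sin (t1-t3)
        = -(Real.sin (t3-t1) + Real.sin (t2-t3) + Real.sin (t1-t2)) := by
      linear_combination ssym t3 t2 + ssym t1 t3 + ssym t2 t1
    rw [e, abs_neg]
    exact absD_sorted hθ1 hθ2 a13 a32 h1l h2u
  · -- t3 ≤ t1 ≤ t2
    have e : Real.sin (t2-t1) + Real.sin (t3-t2) + Real.sin (t1-t3)
        = -(Real.sin (t1-t3) + Real.sin (t2-t1) + Real.sin (t3-t2)) + 2*(Real.sin (t2-t1) + Real.sin (t3-t2) + Real.sin (t1-t3)) := by ring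
    have e2 : Real.sin (t2-t1) + Real.sin (t3-t2) + Real.sin (t1-t3)
        = Real.sin (t1-t3) + Real.sin (t2-t1) + Real.sin (t3-t2) := by ring
    rw [e2]
    exact absD_sorted hθ1 hθ2 a31 a12 h3l h2u
  · -- t2 ≤ t1, t2 ≤ t3, t1 ≤ t3 : t2 ≤ t1 ≤ t3
    have e : Real.sin (t2-t1) + Real.sin (t3-t2) + Real.sin (t1-t3)
        = -(Real.sin (t1-t2) + Real.sin (t3-t1) + Real.sin (t2-t3)) := by
      linear_combination ssym t2 t1 + ssym t3 t2 + ssym t1 t3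
    rw [e, abs_neg]
    exact absD_sorted hθ1 hθ2 a21 a13 h2l h3u
  · -- t2 ≤ t3 ≤ t1
    have e2 : Real.sin (t2-t1) + Real.sin (t3-t2) + Real.sin (t1-t3)
        = Real.sin (t3-t2) + Real.sin (t1-t3) + Real.sin (t2-t1) := by ring
    rw [e2]
    exact absD_sorted hθ1 hθ2 a23 a31 h2l h1u
  · -- t3 ≤ t2 ≤ t1? here: t2 ≥ t3? cases: a21 : t2 ≤ t1, a32: t3 ≤ t2, a13 : t1 ≤ t3 -- degenerate: t1 ≤ t3 ≤ t2 ≤ t1 all equal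
    have e : t1 = t2 := le_antisymm (a13.trans a32) a21
    have e' : t2 = t3 := le_antisymm (e ▸ a13) a32
    subst e e'
    simp only [sub_self, Real.sin_zero, add_zero, zero_add, abs_zero]
    have hs : 0 ≤ Real.sin (θ/2) := Real.sin_nonneg_of_nonneg_of_le_pi (by linarith [pi_pos]) (by linarith [pi_pos])
    nlinarith [Real.neg_one_le_cos (θ/2)]
  · -- t3 ≤ t2 ≤ t1
    have e : Real.sin (t2-t1) + Real.sin (t3-t2) + Real.sin (t1-t3)
        = -(Real.sin (t2-t3) + Real.sin (t1-t2) + Real.sin (t3-t1)) := by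
      linear_combination ssym t1 t2 + ssym t2 t3 + ssym t3 t1
    rw [e, abs_neg]
    exact absD_sorted hθ1 hθ2 a32 a21 h3l h1u

noncomputable def Dfun (u1 v1 u2 v2 u3 v3 : ℝ) : ℝ :=
  u1*v2 - u2*v1 + (u2*v3 - u3*v2) + (u3*v1 - u1*v3)

lemma Dfun_cyc (u1 v1 u2 v2 u3 v3 : ℝ) :
    Dfun u1 v1 u2 v2 u3 v3 = Dfun u2 v2 u3 v3 u1 v1 := by
  simp only [Dfun]; ring

lemma exists_angle {θ : ℝ} (hθ1 : 2 * π / 3 ≤ θ) (hθ2 : θ ≤ π) {u v : ℝ}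
    (h : u^2 + v^2 = 1) (hu : u ≤ Real.cos (θ/2)) :
    ∃ t ∈ Set.Icc (θ/2) (2*π - θ/2), Real.cos t = u ∧ Real.sin t = v := by
  have hπ := pi_pos
  have hu1 : -1 ≤ u := by nlinarith [sq_nonneg v]
  have hu2 : u ≤ 1 := by nlinarith [sq_nonneg v]
  have harc : θ/2 ≤ Real.arccos u := by
    by_contra hlt
    push_neg at hlt
    have := Real.cos_lt_cos_of_nonneg_of_le_pi (Real.arccos_nonneg u) (by linarith) hlt
    rw [Real.cos_arccos hu1 hu2] at this
    linarith
  have harcu : Real.arccos u ≤ π := Real.arccos_le_pi u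
  have hsin : Real.sin (Real.arccos u) = Real.sqrt (1 - u^2) := Real.sin_arccos u
  have hsqv : Real.sqrt (1 - u^2) = |v| := by
    rw [show 1 - u^2 = v^2 by linarith, Real.sqrt_sq_eq_abs]
  rcases le_total 0 v with hv | hv
  · exact ⟨Real.arccos u, ⟨harc, by linarith⟩, Real.cos_arccos hu1 hu2,
      by rw [hsin, hsqv, abs_of_nonneg hv]⟩
  · refine ⟨2*π - Real.arccos u, ⟨by linarith, by linarith⟩, ?_, ?_⟩
    · rw [Real.cos_sub, Real.cos_two_pi, Real.sin_two_pi]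
      simpa using Real.cos_arccos hu1 hu2
    · rw [Real.sin_sub, Real.sin_two_pi, Real.cos_two_pi, hsin, hsqv, abs_of_nonpos hv]
      ring

lemma circle_D {θ : ℝ} (hθ1 : 2 * π / 3 ≤ θ) (hθ2 : θ ≤ π) {u1 v1 u2 v2 u3 v3 : ℝ}
    (h1 : u1^2 + v1^2 = 1) (h2 : u2^2 + v2^2 = 1) (h3 : u3^2 + v3^2 = 1)
    (hu1 : u1 ≤ Real.cos (θ/2)) (hu2 : u2 ≤ Real.cos (θ/2)) (hu3 : u3 ≤ Real.cos (θ/2)) :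
    |Dfun u1 v1 u2 v2 u3 v3| ≤ 2 * (Real.sin (θ/2) * (1 + Real.cos (θ/2))) := by
  obtain ⟨t1, ht1, hc1, hs1⟩ := exists_angle hθ1 hθ2 h1 hu1
  obtain ⟨t2, ht2, hc2, hs2⟩ := exists_angle hθ1 hθ2 h2 hu2
  obtain ⟨t3, ht3, hc3, hs3⟩ := exists_angle hθ1 hθ2 h3 hu3
  have e : Dfun u1 v1 u2 v2 u3 v3
      = Real.sin (t2-t1) + Real.sin (t3-t2) + Real.sin (t1-t3) := by
    rw [Real.sin_sub, Real.sin_sub, Real.sin_sub, hc1, hs1, hc2, hs2, hc3, hs3]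
    simp only [Dfun]; ring
  rw [e]
  exact absD hθ1 hθ2 ht1 ht2 ht3

lemma relax_first {M u1 v1 u2 v2 u3 v3 r : ℝ} (hr : |v1| ≤ r)
    (h1 : |Dfun u1 r u2 v2 u3 v3| ≤ M) (h2 : |Dfun u1 (-r) u2 v2 u3 v3| ≤ M) :
    |Dfun u1 v1 u2 v2 u3 v3| ≤ M := by
  simp only [Dfun] at *
  rw [abs_le] at *
  obtain ⟨hra, hrb⟩ := hr
  rcases le_total 0 (u3 - u2) with hc | hc
  · have p1 : (u3 - u2) * v1 ≤ (u3 - u2) * r := mul_le_mul_of_nonneg_left hrb hc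
    have p2 : (u3 - u2) * (-r) ≤ (u3 - u2) * v1 := mul_le_mul_of_nonneg_left hra hc
    constructor <;> nlinarith
  · have p1 : (u3 - u2) * r ≤ (u3 - u2) * v1 := mul_le_mul_of_nonpos_left hrb hc
    have p2 : (u3 - u2) * v1 ≤ (u3 - u2) * (-r) := mul_le_mul_of_nonpos_left hra hc
    constructor <;> nlinarith

lemma cap_D {θ : ℝ} (hθ1 : 2 * π / 3 ≤ θ) (hθ2 : θ ≤ π) {u1 v1 u2 v2 u3 v3 : ℝ}
    (h1 : u1^2 + v1^2 ≤ 1) (h2 : u2^2 + v2^2 ≤ 1) (h3 : u3^2 + v3^2 ≤ 1)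
    (hu1 : u1 ≤ Real.cos (θ/2)) (hu2 : u2 ≤ Real.cos (θ/2)) (hu3 : u3 ≤ Real.cos (θ/2)) :
    |Dfun u1 v1 u2 v2 u3 v3| ≤ 2 * (Real.sin (θ/2) * (1 + Real.cos (θ/2))) := by
  -- first relax to circle one coordinate at a time
  have key : ∀ u v : ℝ, u^2 + v^2 ≤ 1 →
      (|v| ≤ Real.sqrt (1 - u^2) ∧ u^2 + (Real.sqrt (1 - u^2))^2 = 1 ∧
        u^2 + (-Real.sqrt (1 - u^2))^2 = 1) := by
    intro u v h
    have h0 : 0 ≤ 1 - u^2 := by nlinarith [sq_nonneg v]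
    have hs : (Real.sqrt (1 - u^2))^2 = 1 - u^2 := Real.sq_sqrt h0
    refine ⟨?_, by linarith, by rw [neg_pow]; simp; linarith⟩
    rw [← Real.sqrt_sq_eq_abs]
    exact Real.sqrt_le_sqrt (by nlinarith)
  obtain ⟨hv1, hc1p, hc1m⟩ := key u1 v1 h1
  obtain ⟨hv2, hc2p, hc2m⟩ := key u2 v2 h2
  obtain ⟨hv3, hc3p, hc3m⟩ := key u3 v3 h3
  set r1 := Real.sqrt (1 - u1^2)
  set r2 := Real.sqrt (1 - u2^2)
  set r3 := Real.sqrt (1 - u3^2)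
  apply relax_first hv1 <;>
  · rw [Dfun_cyc]
    apply relax_first hv2 <;>
    · rw [Dfun_cyc]
      apply relax_first hv3 <;>
      · rw [Dfun_cyc]
        first
        | exact circle_D hθ1 hθ2 hc1p hc2p hc3p hu1 hu2 hu3
        | exact circle_D hθ1 hθ2 hc1m hc2p hc3p hu1 hu2 hu3
        | exact circle_D hθ1 hθ2 hc1p hc2m hc3p hu1 hu2 hu3
        | exact circle_D hθ1 hθ2 hc1m hc2m hc3p hu1 hu2 hu3
        | exact circle_D hθ1 hθ2 hc1p hc2p hc3m hu1 hu2 hu3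
        | exact circle_D hθ1 hθ2 hc1m hc2p hc3m hu1 hu2 hu3
        | exact circle_D hθ1 hθ2 hc1p hc2m hc3m hu1 hu2 hu3
        | exact circle_D hθ1 hθ2 hc1m hc2m hc3m hu1 hu2 hu3

local notation "E2" => EuclideanSpace ℝ (Fin 2)

def Tset : Set E2 := {p | 0 ≤ p 0 ∧ 0 ≤ p 1 ∧ p 0 + p 1 ≤ 1}

lemma measurable_S : MeasurableSet {q : ℝ × ℝ | 0 ≤ q.1 ∧ 0 ≤ q.2 ∧ q.1 + q.2 ≤ 1} := by
  apply MeasurableSet.inter (measurableSet_le measurable_const measurable_fst)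
  exact MeasurableSet.inter (measurableSet_le measurable_const measurable_snd)
    (measurableSet_le (measurable_fst.add measurable_snd) measurable_const)

lemma volume_S : volume {q : ℝ × ℝ | 0 ≤ q.1 ∧ 0 ≤ q.2 ∧ q.1 + q.2 ≤ 1}
    = ENNReal.ofReal (1/2) := by
  rw [MeasureTheory.Measure.volume_eq_prod, MeasureTheory.Measure.prod_apply measurable_S]
  have hslice : ∀ x : ℝ, (Prod.mk x ⁻¹' {q : ℝ × ℝ | 0 ≤ q.1 ∧ 0 ≤ q.2 ∧ q.1 + q.2 ≤ 1})
      = if x ∈ Set.Icc (0:ℝ) 1 then Set.Icc 0 (1 - x) else ∅ := by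
    intro x
    by_cases hx : x ∈ Set.Icc (0:ℝ) 1
    · simp only [hx, if_true]
      ext y
      simp only [Set.mem_preimage, Set.mem_setOf_eq, Set.mem_Icc]
      exact ⟨fun ⟨_, h2, h3⟩ => ⟨h2, by linarith⟩, fun ⟨h2, h3⟩ => ⟨hx.1, h2, by linarith⟩⟩
    · simp only [hx, if_false]
      ext y
      simp only [Set.mem_preimage, Set.mem_setOf_eq, Set.mem_empty_iff_false, iff_false]
      rintro ⟨h1, h2, h3⟩
      rw [Set.mem_Icc] at hx
      push_neg at hx
      have := hx h1
      linarith
  have : (fun x => volume (Prod.mk x ⁻¹' {q : ℝ × ℝ | 0 ≤ q.1 ∧ 0 ≤ q.2 ∧ q.1 + q.2 ≤ 1}))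
      = (Set.Icc (0:ℝ) 1).indicator (fun x => ENNReal.ofReal (1 - x)) := by
    funext x
    rw [hslice x]
    by_cases hx : x ∈ Set.Icc (0:ℝ) 1
    · simp [hx, Real.volume_Icc]
    · simp [hx]
  have hrw := lintegral_congr (μ := (volume : Measure ℝ)) fun x => congrFun this x
  rw [hrw, lintegral_indicator]
  swap
  · exact measurableSet_Icc
  rw [← MeasureTheory.ofReal_integral_eq_lintegral_ofReal]
  · congr 1
    rw [MeasureTheory.integral_Icc_eq_integral_Ioc, ← intervalIntegral.integral_of_le zero_le_one]
    rw [intervalIntegral.integral_sub intervalIntegrable_const intervalIntegral.intervalIntegrable_id,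
      intervalIntegral.integral_const, integral_id]
    norm_num
  · exact (continuous_const.sub continuous_id).continuousOn.integrableOn_Icc
  · exact (ae_restrict_iff' measurableSet_Icc).2 (ae_of_all _ fun x hx => by
      simp only [Pi.zero_apply]; linarith [hx.2])

lemma volume_Tset : volume Tset = ENNReal.ofReal (1/2) := by
  have h1 := EuclideanSpace.volume_preserving_symm_measurableEquiv_toLp (Fin 2)
  have h2 := MeasureTheory.volume_preserving_finTwoArrow ℝ
  have e1 : Tset = (MeasurableEquiv.toLp 2 (Fin 2 → ℝ)).symm ⁻¹'
      ((MeasurableEquiv.finTwoArrow) ⁻¹' {q : ℝ × ℝ | 0 ≤ q.1 ∧ 0 ≤ q.2 ∧ q.1 + q.2 ≤ 1}) := rfl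
  rw [e1, h1.measure_preimage, h2.measure_preimage]
  · exact volume_S
  · exact measurable_S.nullMeasurableSet
  · exact (measurable_S.preimage (MeasurableEquiv.measurable _)).nullMeasurableSet

noncomputable def ee0 : E2 := EuclideanSpace.single 0 1
noncomputable def ee1 : E2 := EuclideanSpace.single 1 1

lemma ee0_apply0 : ee0 0 = 1 := by simp [ee0, EuclideanSpace.single_apply]
lemma ee0_apply1 : ee0 1 = 0 := by simp [ee0, EuclideanSpace.single_apply]
lemma ee1_apply0 : ee1 0 = 0 := by simp [ee1, EuclideanSpace.single_apply]
lemma ee1_apply1 : ee1 1 = 1 := by simp [ee1, EuclideanSpace.single_apply]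

lemma Tset_convex : Convex ℝ Tset := by
  intro a ha b hb α β hα hβ hab
  obtain ⟨ha0, ha1, has⟩ := ha
  obtain ⟨hb0, hb1, hbs⟩ := hb
  refine ⟨?_, ?_, ?_⟩ <;>
    simp only [PiLp.add_apply, PiLp.smul_apply, smul_eq_mul] <;> nlinarith

lemma Tset_eq : Tset = convexHull ℝ {0, ee0, ee1} := by
  apply le_antisymm
  · intro p hp
    obtain ⟨h0, h1, hs⟩ := hp
    have hp_eq : p = p 0 • ee0 + p 1 • ee1 := by
      ext i
      fin_cases i <;>
        simp [PiLp.add_apply, PiLp.smul_apply, ee0_apply0, ee0_apply1, ee1_apply0, ee1_apply1]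
    rw [convexHull_insert ⟨ee0, Set.mem_insert _ _⟩, mem_convexJoin]
    rcases eq_or_lt_of_le (by linarith : (0:ℝ) ≤ p 0 + p 1) with hz | hz
    · have hp0 : p 0 = 0 := by linarith
      have hp1 : p 1 = 0 := by linarith
      have : p = 0 := by rw [hp_eq, hp0, hp1]; simp
      rw [this]
      exact ⟨0, rfl, ee0, subset_convexHull ℝ _ (Set.mem_insert _ _), left_mem_segment ℝ 0 ee0⟩
    · set s := p 0 + p 1 with hs_def
      set z := (p 0 / s) • ee0 + (p 1 / s) • ee1 with hz_def
      have hzmem : z ∈ convexHull ℝ ({ee0, ee1} : Set E2) := by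
        have : z ∈ segment ℝ ee0 ee1 := by
          refine ⟨p 0 / s, p 1 / s, by positivity, by positivity, ?_, rfl⟩
          field_simp
          exact hs_def.symm
        exact segment_subset_convexHull (by simp) (by simp) this
      refine ⟨0, rfl, z, hzmem, 1 - s, s, by linarith, le_of_lt hz, by ring, ?_⟩
      have e0 : s * (p 0 / s) = p 0 := by field_simp
      have e1 : s * (p 1 / s) = p 1 := by field_simp
      rw [smul_zero, zero_add, hz_def, smul_add, smul_smul, smul_smul, e0, e1, ← hp_eq]
  · apply convexHull_min _ Tset_convex
    rintro p (rfl | rfl | rfl)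
    · exact ⟨le_refl _, le_refl _, by norm_num⟩
    · exact ⟨by rw [ee0_apply0]; norm_num, by rw [ee0_apply1], by rw [ee0_apply0, ee0_apply1]; norm_num⟩
    · exact ⟨by rw [ee1_apply0], by rw [ee1_apply1]; norm_num, by rw [ee1_apply0, ee1_apply1]; norm_num⟩

noncomputable def lmap (a b : E2) : E2 →ₗ[ℝ] E2 where
  toFun := fun p => p 0 • a + p 1 • b
  map_add' := fun p q => by
    simp only [PiLp.add_apply, add_smul]
    abel
  map_smul' := fun c p => by
    simp only [PiLp.smul_apply, smul_eq_mul, RingHom.id_apply, smul_smul, smul_add]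

lemma lmap_det (a b : E2) :
    LinearMap.det (lmap a b) = a 0 * b 1 - b 0 * a 1 := by
  have hb : LinearMap.toMatrix (PiLp.basisFun 2 ℝ (Fin 2)) (PiLp.basisFun 2 ℝ (Fin 2)) (lmap a b)
      = !![a 0, b 0; a 1, b 1] := by
    ext i j
    rw [LinearMap.toMatrix_apply, PiLp.basisFun_repr]
    fin_cases j <;> fin_cases i <;>
      simp [(show ∀ p : E2, lmap a b p = p 0 • a + p 1 • b from fun _ => rfl), PiLp.basisFun_apply, PiLp.add_apply, PiLp.smul_apply]
  rw [← LinearMap.det_toMatrix (PiLp.basisFun 2 ℝ (Fin 2)), hb, Matrix.det_fin_two_of]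

noncomputable def amap (x a b : E2) : E2 →ᵃ[ℝ] E2 where
  toFun := fun p => x + (lmap a b) p
  linear := lmap a b
  map_vadd' := fun p v => by
    simp only [vadd_eq_add, map_add]
    abel

lemma amap_image (x a b : E2) (s : Set E2) :
    (amap x a b) '' s = (fun q => x + q) '' ((lmap a b) '' s) := by
  rw [Set.image_image]
  rfl

lemma volume_add_image (x : E2) (s : Set E2) :
    volume ((fun q => x + q) '' s) = volume s := by
  have : (fun q => x + q) '' s = (fun q => -x + q) ⁻¹' s := by
    ext q
    simp only [Set.mem_image, Set.mem_preimage]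
    constructor
    · rintro ⟨r, hr, rfl⟩; simpa using hr
    · intro h; exact ⟨-x + q, h, by abel⟩
  rw [this, measure_preimage_add]

lemma volume_triangle (x y w : E2) :
    volume (convexHull ℝ ({x, y, w} : Set E2))
      = ENNReal.ofReal (|(y 0 - x 0) * (w 1 - x 1) - (w 0 - x 0) * (y 1 - x 1)| / 2) := by
  have him : (amap x (y - x) (w - x)) '' (convexHull ℝ ({0, ee0, ee1} : Set E2))
      = convexHull ℝ ({x, y, w} : Set E2) := by
    rw [AffineMap.image_convexHull]
    congr 1
    have h0 : (amap x (y - x) (w - x)) 0 = x := by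
      show x + ((0:E2) 0 • (y - x) + (0:E2) 1 • (w - x)) = x
      norm_num
    have h1 : (amap x (y - x) (w - x)) ee0 = y := by
      show x + (ee0 0 • (y - x) + ee0 1 • (w - x)) = y
      rw [ee0_apply0, ee0_apply1]
      norm_num
    have h2 : (amap x (y - x) (w - x)) ee1 = w := by
      show x + (ee1 0 • (y - x) + ee1 1 • (w - x)) = w
      rw [ee1_apply0, ee1_apply1]
      norm_num
    rw [Set.image_insert_eq, Set.image_insert_eq, Set.image_singleton, h0, h1, h2]
  rw [← him, ← Tset_eq, amap_image, volume_add_image,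
    MeasureTheory.Measure.addHaar_image_linearMap, lmap_det, volume_Tset,
    ← ENNReal.ofReal_mul (abs_nonneg _)]
  congr 1
  simp only [PiLp.sub_apply]
  ring

lemma coord_sq (p : E2) : p 0 ^ 2 + p 1 ^ 2 = ‖p‖ ^ 2 := by
  have h : ∑ i, ‖p i‖ ^ 2 = p 0 ^ 2 + p 1 ^ 2 := by
    simp [Fin.sum_univ_two, sq_abs]
  rw [EuclideanSpace.norm_eq, Real.sq_sqrt (by positivity), h]

lemma norm_eq_one_of (p : E2) (h : p 0 ^ 2 + p 1 ^ 2 = 1) : ‖p‖ = 1 := by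
  have h2 : ‖p‖ ^ 2 = 1 := by rw [← coord_sq, h]
  nlinarith [norm_nonneg p]

lemma inner_coords (n p : E2) : ⟪n, p⟫ = n 0 * p 0 + n 1 * p 1 := by
  simp [PiLp.inner_apply, RCLike.inner_apply, conj_trivial, Fin.sum_univ_two]
  ring


set_option maxHeartbeats 1000000

/-- The maximal area of a triangle with vertices in the larger circular segment of the
unit disk cut off by a chord subtending central angle `θ ∈ [2π/3, π]`
is `sin(θ/2) + (1/2)·sin θ`, attained by an isosceles triangle inscribed in the circle. -/
theorem max_area_triangle_in_cap (θ : ℝ) (hθ : θ ∈ Set.Icc (2 * π / 3) π)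
    (n : EuclideanSpace ℝ (Fin 2)) (hn : ‖n‖ = 1) :
    IsGreatest {a : ℝ | ∃ x y w : EuclideanSpace ℝ (Fin 2),
        x ∈ closedBall (0 : EuclideanSpace ℝ (Fin 2)) 1 ∩ {p | ⟪n, p⟫ ≤ Real.cos (θ / 2)} ∧
        y ∈ closedBall (0 : EuclideanSpace ℝ (Fin 2)) 1 ∩ {p | ⟪n, p⟫ ≤ Real.cos (θ / 2)} ∧
        w ∈ closedBall (0 : EuclideanSpace ℝ (Fin 2)) 1 ∩ {p | ⟪n, p⟫ ≤ Real.cos (θ / 2)} ∧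
        a = (volume (convexHull ℝ ({x, y, w} : Set (EuclideanSpace ℝ (Fin 2))))).toReal}
      (Real.sin (θ / 2) + 1 / 2 * Real.sin θ) ∧
    ∃ x y w : EuclideanSpace ℝ (Fin 2),
      x ∈ sphere (0 : EuclideanSpace ℝ (Fin 2)) 1 ∩ {p | ⟪n, p⟫ ≤ Real.cos (θ / 2)} ∧
      y ∈ sphere (0 : EuclideanSpace ℝ (Fin 2)) 1 ∩ {p | ⟪n, p⟫ ≤ Real.cos (θ / 2)} ∧
      w ∈ sphere (0 : EuclideanSpace ℝ (Fin 2)) 1 ∩ {p | ⟪n, p⟫ ≤ Real.cos (θ / 2)} ∧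
      dist x y = dist x w ∧
      (volume (convexHull ℝ ({x, y, w} : Set (EuclideanSpace ℝ (Fin 2))))).toReal
        = Real.sin (θ / 2) + 1 / 2 * Real.sin θ := by
  obtain ⟨hθ1, hθ2⟩ := hθ
  have hπ := Real.pi_pos
  set c := Real.cos (θ/2) with hc
  set s := Real.sin (θ/2) with hs
  have hn2 : n 0 ^ 2 + n 1 ^ 2 = 1 := by rw [coord_sq, hn]; norm_num
  have hs0 : 0 ≤ s := Real.sin_nonneg_of_nonneg_of_le_pi (by linarith) (by linarith)
  have hc1 : -1 ≤ c := Real.neg_one_le_cos _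
  have hsc2 : s ^ 2 + c ^ 2 = 1 := Real.sin_sq_add_cos_sq (θ/2)
  have hsinθ : Real.sin θ = 2 * s * c := by
    have h2 := Real.sin_two_mul (θ/2)
    rw [show 2 * (θ/2) = θ by ring] at h2
    rw [h2]
  have htarget : Real.sin (θ / 2) + 1 / 2 * Real.sin θ = s * (1 + c) := by
    rw [hsinθ, ← hs]; ring
  -- the perpendicular unit vector
  set m : EuclideanSpace ℝ (Fin 2) := (WithLp.equiv 2 (Fin 2 → ℝ)).symm ![-n 1, n 0] with hm
  have hm0 : m 0 = -n 1 := rfl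
  have hm1 : m 1 = n 0 := rfl
  -- upper bound
  have hub : ∀ x y w : EuclideanSpace ℝ (Fin 2),
      x ∈ closedBall (0 : EuclideanSpace ℝ (Fin 2)) 1 ∩ {p | ⟪n, p⟫ ≤ c} →
      y ∈ closedBall (0 : EuclideanSpace ℝ (Fin 2)) 1 ∩ {p | ⟪n, p⟫ ≤ c} →
      w ∈ closedBall (0 : EuclideanSpace ℝ (Fin 2)) 1 ∩ {p | ⟪n, p⟫ ≤ c} →
      (volume (convexHull ℝ ({x, y, w} : Set (EuclideanSpace ℝ (Fin 2))))).toReal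
        ≤ s * (1 + c) := by
    rintro x y w ⟨hx1, hx2⟩ ⟨hy1, hy2⟩ ⟨hw1, hw2⟩
    rw [volume_triangle, ENNReal.toReal_ofReal (by positivity)]
    have hball : ∀ p : EuclideanSpace ℝ (Fin 2), p ∈ closedBall (0 : EuclideanSpace ℝ (Fin 2)) 1 →
        (n 0 * p 0 + n 1 * p 1)^2 + (-(n 1) * p 0 + n 0 * p 1)^2 ≤ 1 := by
      intro p hp
      rw [mem_closedBall_zero_iff] at hp
      have hp2 : p 0 ^ 2 + p 1 ^ 2 ≤ 1 := by
        rw [coord_sq]; nlinarith [norm_nonneg p]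
      nlinarith [hp2, hn2, sq_nonneg (p 0), sq_nonneg (p 1)]
    have hDeq : (y 0 - x 0) * (w 1 - x 1) - (w 0 - x 0) * (y 1 - x 1)
        = Dfun (n 0 * x 0 + n 1 * x 1) (-(n 1) * x 0 + n 0 * x 1)
            (n 0 * y 0 + n 1 * y 1) (-(n 1) * y 0 + n 0 * y 1)
            (n 0 * w 0 + n 1 * w 1) (-(n 1) * w 0 + n 0 * w 1) := by
      simp only [Dfun]
      linear_combination (-((y 0 - x 0) * (w 1 - x 1) - (w 0 - x 0) * (y 1 - x 1))) * hn2
    rw [Set.mem_setOf_eq, inner_coords] at hx2 hy2 hw2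
    have key := cap_D hθ1 hθ2 (hball x hx1) (hball y hy1) (hball w hw1) hx2 hy2 hw2
    rw [hDeq]
    linarith [key]
  -- witness points
  have hX0 : ((-n : EuclideanSpace ℝ (Fin 2))) 0 = -(n 0) := rfl
  have hX1 : ((-n : EuclideanSpace ℝ (Fin 2))) 1 = -(n 1) := rfl
  have hY0 : (c • n + s • m) 0 = c * n 0 - s * n 1 := by
    simp [PiLp.add_apply, PiLp.smul_apply, hm0, smul_eq_mul]; ring
  have hY1 : (c • n + s • m) 1 = c * n 1 + s * n 0 := by
    simp [PiLp.add_apply, PiLp.smul_apply, hm1, smul_eq_mul]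
  have hW0 : (c • n - s • m) 0 = c * n 0 + s * n 1 := by
    simp [PiLp.sub_apply, PiLp.smul_apply, hm0, smul_eq_mul]
  have hW1 : (c • n - s • m) 1 = c * n 1 - s * n 0 := by
    simp [PiLp.sub_apply, PiLp.smul_apply, hm1, smul_eq_mul]
  have hXs : (-n : EuclideanSpace ℝ (Fin 2)) ∈ sphere (0 : EuclideanSpace ℝ (Fin 2)) 1 := by
    rw [mem_sphere_zero_iff_norm, norm_neg, hn]
  have hYs : (c • n + s • m) ∈ sphere (0 : EuclideanSpace ℝ (Fin 2)) 1 := by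
    rw [mem_sphere_zero_iff_norm]
    exact norm_eq_one_of _ (by rw [hY0, hY1]; linear_combination (c^2+s^2) * hn2 + hsc2)
  have hWs : (c • n - s • m) ∈ sphere (0 : EuclideanSpace ℝ (Fin 2)) 1 := by
    rw [mem_sphere_zero_iff_norm]
    exact norm_eq_one_of _ (by rw [hW0, hW1]; linear_combination (c^2+s^2) * hn2 + hsc2)
  have hXi : ⟪n, (-n : EuclideanSpace ℝ (Fin 2))⟫ ≤ c := by
    rw [inner_coords, hX0, hX1]
    have : n 0 * -(n 0) + n 1 * -(n 1) = -1 := by linear_combination -hn2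
    rw [this]; linarith
  have hYi : ⟪n, c • n + s • m⟫ ≤ c := by
    rw [inner_coords, hY0, hY1]
    have : n 0 * (c * n 0 - s * n 1) + n 1 * (c * n 1 + s * n 0) = c := by
      linear_combination c * hn2
    rw [this]
  have hWi : ⟪n, c • n - s • m⟫ ≤ c := by
    rw [inner_coords, hW0, hW1]
    have : n 0 * (c * n 0 + s * n 1) + n 1 * (c * n 1 - s * n 0) = c := by
      linear_combination c * hn2
    rw [this]
  have hdist : dist (-n : EuclideanSpace ℝ (Fin 2)) (c • n + s • m)
      = dist (-n : EuclideanSpace ℝ (Fin 2)) (c • n - s • m) := by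
    rw [dist_eq_norm, dist_eq_norm, EuclideanSpace.norm_eq, EuclideanSpace.norm_eq]
    congr 1
    simp only [Fin.sum_univ_two, PiLp.sub_apply, PiLp.add_apply, PiLp.neg_apply,
      PiLp.smul_apply, smul_eq_mul, hm0, hm1, Real.norm_eq_abs, sq_abs]
    ring
  have hvol : (volume (convexHull ℝ
        ({-n, c • n + s • m, c • n - s • m} : Set (EuclideanSpace ℝ (Fin 2))))).toReal
      = s * (1 + c) := by
    rw [volume_triangle]
    have hD : ((c • n + s • m) 0 - (-n : EuclideanSpace ℝ (Fin 2)) 0)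
          * ((c • n - s • m) 1 - (-n : EuclideanSpace ℝ (Fin 2)) 1)
        - ((c • n - s • m) 0 - (-n : EuclideanSpace ℝ (Fin 2)) 0)
          * ((c • n + s • m) 1 - (-n : EuclideanSpace ℝ (Fin 2)) 1)
        = -(2 * (s * (1 + c))) := by
      rw [hX0, hX1, hY0, hY1, hW0, hW1]
      linear_combination (-(2 * s * (1 + c))) * hn2
    rw [hD, abs_neg, abs_of_nonneg (by nlinarith : (0:ℝ) ≤ 2 * (s * (1 + c)))]
    rw [ENNReal.toReal_ofReal (by nlinarith : (0:ℝ) ≤ 2 * (s * (1 + c)) / 2)]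
    ring
  refine ⟨⟨⟨-n, c • n + s • m, c • n - s • m,
      ⟨mem_closedBall_zero_iff.2 (by rw [norm_neg, hn]), hXi⟩,
      ⟨mem_closedBall_zero_iff.2 (le_of_eq (mem_sphere_zero_iff_norm.1 hYs)), hYi⟩,
      ⟨mem_closedBall_zero_iff.2 (le_of_eq (mem_sphere_zero_iff_norm.1 hWs)), hWi⟩,
      htarget.trans hvol.symm⟩, ?_⟩,
    ⟨-n, c • n + s • m, c • n - s • m, ⟨hXs, hXi⟩, ⟨hYs, hYi⟩, ⟨hWs, hWi⟩, hdist,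
      hvol.trans htarget.symm⟩⟩
  rintro a ⟨x, y, w, hx, hy, hw, rfl⟩
  rw [htarget]
  exact hub x y w hx hy hw
end

section
/- Let ψ : [0,∞) → (0,1] be a non-increasing function with ψ(0)=1 satisfying ψ(τ/k) = ψ(τ)^{1/k} for all τ ≥ 0 and all integers k ≥ 1 of the form k = m^d for a fixed d ≥ 1 and all m ∈ ℕ*. If additionally ψ(τ) ≥ e^{−τ} for all τ, then there exists θ ∈ [0,1] such that ψ(τ) = e^{−θτ} for all τ ≥ 0. -/
open Real

/-- The only positive non-increasing solutions of the extremal-index functional equation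
bounded below by `e^{−τ}` are the exponentials `e^{−θτ}` with `θ ∈ [0,1]`. -/
theorem extremal_index_functional_equation (d : ℕ) (hd : 1 ≤ d) (ψ : ℝ → ℝ)
    (hpos : ∀ τ : ℝ, 0 ≤ τ → 0 < ψ τ ∧ ψ τ ≤ 1)
    (h0 : ψ 0 = 1)
    (hmono : AntitoneOn ψ (Set.Ici 0))
    (hfe : ∀ τ : ℝ, 0 ≤ τ → ∀ m : ℕ, 1 ≤ m →
      ψ (τ / ((m ^ d : ℕ) : ℝ)) = ψ τ ^ ((1 : ℝ) / ((m ^ d : ℕ) : ℝ)))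
    (hlb : ∀ τ : ℝ, 0 ≤ τ → Real.exp (-τ) ≤ ψ τ) :
    ∃ θ : ℝ, 0 ≤ θ ∧ θ ≤ 1 ∧ ∀ τ : ℝ, 0 ≤ τ → ψ τ = Real.exp (-θ * τ) := by
  have hd0 : d ≠ 0 := by omega
  have hψ1pos : 0 < ψ 1 := (hpos 1 zero_le_one).1
  set θ : ℝ := -Real.log (ψ 1) with hθ
  have hψ1 : ψ 1 = Real.exp (-θ) := by
    rw [hθ, neg_neg, Real.exp_log hψ1pos]
  have hθ0 : 0 ≤ θ := by
    have h1 := (hpos 1 zero_le_one).2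
    have h2 := Real.log_nonpos (le_of_lt hψ1pos) h1
    simp only [hθ]; linarith
  have hθ1 : θ ≤ 1 := by
    have h := hlb 1 zero_le_one
    have h2 := Real.log_le_log (Real.exp_pos _) h
    rw [Real.log_exp] at h2
    simp only [hθ]; linarith
  refine ⟨θ, hθ0, hθ1, ?_⟩
  -- scaling-up identity
  have hup : ∀ τ : ℝ, 0 ≤ τ → ∀ m : ℕ, 1 ≤ m →
      ψ (((m ^ d : ℕ) : ℝ) * τ) = ψ τ ^ (m ^ d : ℕ) := by
    intro τ hτ m hm
    have hK : (0 : ℝ) < ((m ^ d : ℕ) : ℝ) := by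
      have : 0 < m ^ d := Nat.pow_pos (by omega)
      exact_mod_cast this
    have h1 := hfe (((m ^ d : ℕ) : ℝ) * τ) (by positivity) m hm
    rw [mul_div_cancel_left₀ τ (ne_of_gt hK)] at h1
    have hKpos := (hpos (((m ^ d : ℕ) : ℝ) * τ) (by positivity)).1
    rw [h1, ← Real.rpow_natCast (_ ^ _) (m ^ d), ← Real.rpow_mul hKpos.le,
      one_div, inv_mul_cancel₀ (ne_of_gt hK), Real.rpow_one]
  -- values at ratios of d-th powers
  have hratio : ∀ q : ℚ, 0 < q → ψ (((q : ℝ)) ^ d) = Real.exp (-θ * ((q : ℝ)) ^ d) := by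
    intro q hq
    set a : ℕ := q.num.toNat with ha
    set b : ℕ := q.den with hb
    have ha1 : 1 ≤ a := by
      have : 0 < q.num := Rat.num_pos.mpr hq
      omega
    have hb1 : 1 ≤ b := q.pos
    have hcast : (q : ℝ) = (a : ℝ) / (b : ℝ) := by
      rw [Rat.cast_def]
      congr 1
      · rw [ha]
        exact_mod_cast (Int.toNat_of_nonneg (Rat.num_pos.mpr hq).le).symm
    have hbpos : (0 : ℝ) < ((b ^ d : ℕ) : ℝ) := by
      have : 0 < b ^ d := Nat.pow_pos (by omega)
      exact_mod_cast this
    have hqd : ((q : ℝ)) ^ d = ((a ^ d : ℕ) : ℝ) / ((b ^ d : ℕ) : ℝ) := by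
      rw [hcast, div_pow]; push_cast; ring
    have hA : ψ ((a ^ d : ℕ) : ℝ) = ψ 1 ^ (a ^ d : ℕ) := by
      have := hup 1 zero_le_one a ha1
      rwa [mul_one] at this
    have h2 := hfe ((a ^ d : ℕ) : ℝ) (by positivity) b hb1
    rw [hA] at h2
    rw [hqd, h2, ← Real.rpow_natCast (ψ 1) (a ^ d), ← Real.rpow_mul hψ1pos.le,
      hψ1, ← Real.exp_mul]
    congr 1
    push_cast
    ring
  -- density of d-th power rationals
  have hdense : ∀ u v : ℝ, 0 < u → u < v →
      ∃ r : ℝ, u < r ∧ r < v ∧ ψ r = Real.exp (-θ * r) := by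
    intro u v hu huv
    have hxy : u ^ ((d : ℝ)⁻¹) < v ^ ((d : ℝ)⁻¹) :=
      Real.rpow_lt_rpow hu.le huv (by positivity)
    obtain ⟨q, hq1, hq2⟩ := exists_rat_btwn hxy
    have hqpos : (0 : ℝ) < (q : ℝ) :=
      lt_trans (Real.rpow_pos_of_pos hu _) hq1
    have hq0 : (0 : ℚ) < q := by exact_mod_cast hqpos
    refine ⟨((q : ℝ)) ^ d, ?_, ?_, hratio q hq0⟩
    · calc u = (u ^ ((d : ℝ)⁻¹)) ^ d := (Real.rpow_inv_natCast_pow hu.le hd0).symm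
        _ < ((q : ℝ)) ^ d := by
            exact pow_lt_pow_left₀ hq1 (Real.rpow_nonneg hu.le _) hd0
    · calc ((q : ℝ)) ^ d < (v ^ ((d : ℝ)⁻¹)) ^ d := by
            exact pow_lt_pow_left₀ hq2 hqpos.le hd0
        _ = v := Real.rpow_inv_natCast_pow (le_trans hu.le huv.le) hd0
  intro τ hτ
  rcases eq_or_lt_of_le hτ with h | hτpos
  · rw [← h, h0, mul_zero, Real.exp_zero]
  -- upper bound: ψ τ ≤ exp(-θ(τ-ε))
  have hub : ∀ ε : ℝ, 0 < ε → ψ τ ≤ Real.exp (-θ * τ) * Real.exp (θ * ε) := by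
    intro ε hε
    rw [← Real.exp_add]
    rcases le_or_gt τ ε with hc | hc
    · calc ψ τ ≤ 1 := (hpos τ hτ).2
        _ ≤ Real.exp (-θ * τ + θ * ε) := by
            rw [← Real.exp_zero]
            apply Real.exp_le_exp.mpr
            nlinarith
    · obtain ⟨r, hr1, hr2, hr3⟩ := hdense (τ - ε) τ (by linarith) (by linarith)
      have hr0 : 0 ≤ r := by linarith
      calc ψ τ ≤ ψ r := hmono (Set.mem_Ici.mpr hr0) (Set.mem_Ici.mpr hτ) hr2.le
        _ = Real.exp (-θ * r) := hr3
        _ ≤ Real.exp (-θ * τ + θ * ε) := by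
            apply Real.exp_le_exp.mpr
            nlinarith
  -- lower bound: exp(-θ(τ+ε)) ≤ ψ τ
  have hlbe : ∀ ε : ℝ, 0 < ε → Real.exp (-θ * τ) * Real.exp (-(θ * ε)) ≤ ψ τ := by
    intro ε hε
    rw [← Real.exp_add]
    obtain ⟨r, hr1, hr2, hr3⟩ := hdense τ (τ + ε) hτpos (by linarith)
    have hr0 : 0 ≤ r := by linarith
    calc Real.exp (-θ * τ + -(θ * ε)) ≤ Real.exp (-θ * r) := by
          apply Real.exp_le_exp.mpr
          nlinarith
      _ = ψ r := hr3.symm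
      _ ≤ ψ τ := hmono (Set.mem_Ici.mpr hτ) (Set.mem_Ici.mpr hr0) hr1.le
  have hT1 : Filter.Tendsto (fun ε : ℝ => Real.exp (-θ * τ) * Real.exp (θ * ε))
      (nhdsWithin 0 (Set.Ioi 0)) (nhds (Real.exp (-θ * τ))) := by
    have : Filter.Tendsto (fun ε : ℝ => Real.exp (-θ * τ) * Real.exp (θ * ε))
        (nhds 0) (nhds (Real.exp (-θ * τ) * Real.exp (θ * 0))) := by
      exact (continuous_const.mul (Real.continuous_exp.comp
        (continuous_const.mul continuous_id))).tendsto 0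
    simpa using this.mono_left nhdsWithin_le_nhds
  have hT2 : Filter.Tendsto (fun ε : ℝ => Real.exp (-θ * τ) * Real.exp (-(θ * ε)))
      (nhdsWithin 0 (Set.Ioi 0)) (nhds (Real.exp (-θ * τ))) := by
    have : Filter.Tendsto (fun ε : ℝ => Real.exp (-θ * τ) * Real.exp (-(θ * ε)))
        (nhds 0) (nhds (Real.exp (-θ * τ) * Real.exp (-(θ * 0)))) := by
      exact (continuous_const.mul (Real.continuous_exp.comp
        (continuous_const.mul continuous_id).neg)).tendsto 0
    simpa using this.mono_left nhdsWithin_le_nhds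
  have h1 : ψ τ ≤ Real.exp (-θ * τ) :=
    ge_of_tendsto hT1 (by
      filter_upwards [self_mem_nhdsWithin] with ε hε
      exact hub ε hε)
  have h2 : Real.exp (-θ * τ) ≤ ψ τ :=
    le_of_tendsto hT2 (by
      filter_upwards [self_mem_nhdsWithin] with ε hε
      exact hlbe ε hε)
  linarith
end

section
/- Let χ ⊂ ℝ² (more generally ℝ^d) be locally finite and let y ≠ 0 be such that χ ∪ {0, y} is in general position and every Voronoi cell of χ ∪ {0,y} is bounded. Suppose all Voronoi neighbors of 0 (with respect to χ ∪ {0,y}) lie in B(0, v) and all Voronoi neighbors of y lie in B(y, v). Then χ ∩ (B(0,v) ∪ B(y,v)) contains at least d + 1 points. -/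
open Metric

/-- The Voronoi cell of nucleus `x` with respect to the set `η`. -/
def voronoiCell {d : ℕ} (η : Set (EuclideanSpace ℝ (Fin d)))
    (x : EuclideanSpace ℝ (Fin d)) : Set (EuclideanSpace ℝ (Fin d)) :=
  {z | ∀ x' ∈ η, dist z x ≤ dist z x'}

lemma isClosed_voronoiCell {d : ℕ} (η : Set (EuclideanSpace ℝ (Fin d)))
    (x : EuclideanSpace ℝ (Fin d)) : IsClosed (voronoiCell η x) := by
  have : voronoiCell η x = ⋂ x' ∈ η, {z | dist z x ≤ dist z x'} := by
    ext z; simp [voronoiCell]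
  rw [this]
  exact isClosed_biInter fun x' _ =>
    isClosed_le (continuous_id.dist continuous_const) (continuous_id.dist continuous_const)

lemma key {d : ℕ} (hd : 1 ≤ d) (η : Set (EuclideanSpace ℝ (Fin d)))
    (x : EuclideanSpace ℝ (Fin d)) (hx : x ∈ η)
    (hfin : ∀ r : ℝ, (η ∩ closedBall x r).Finite)
    (hbdd : Bornology.IsBounded (voronoiCell η x)) (v : ℝ)
    (hnb : ∀ x' ∈ η, (voronoiCell η x' ∩ voronoiCell η x).Nonempty → x' ∈ closedBall x v) :
    x ∈ convexHull ℝ ((η ∩ closedBall x v) \ {x}) := by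
  set K : Set (EuclideanSpace ℝ (Fin d)) := (η ∩ closedBall x v) \ {x} with hK
  by_contra hxK
  -- get a separating direction u ≠ 0 with ⟪x' - x, u⟫ < 0 for x' ∈ K
  obtain ⟨u, hu, hsep⟩ : ∃ u : EuclideanSpace ℝ (Fin d), u ≠ 0 ∧
      ∀ x' ∈ K, (inner ℝ (x' - x) u : ℝ) < 0 := by
    rcases Set.eq_empty_or_nonempty K with hKe | hKne
    · refine ⟨EuclideanSpace.single ⟨0, hd⟩ 1, ?_, by simp [hKe]⟩
      intro h
      have := congrArg (fun f : EuclideanSpace ℝ (Fin d) => f ⟨0, hd⟩) h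
      simp [EuclideanSpace.single_apply] at this
    · have hKfin : K.Finite := ((hfin v).diff)
      have hconv : Convex ℝ (convexHull ℝ K) := convex_convexHull _ _
      have hclosed : IsClosed (convexHull ℝ K) := (hKfin.isCompact_convexHull (𝕜 := ℝ)).isClosed
      obtain ⟨f, c, hfc, hcx⟩ := geometric_hahn_banach_closed_point hconv hclosed hxK
      set u := (InnerProductSpace.toDual ℝ (EuclideanSpace ℝ (Fin d))).symm f with hu
      have hfu : ∀ z, (inner ℝ u z : ℝ) = f z := fun z => InnerProductSpace.toDual_symm_apply
      obtain ⟨p, hp⟩ := hKne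
      refine ⟨u, ?_, ?_⟩
      · intro h0
        have h1 : f p < f x := lt_trans (hfc p (subset_convexHull ℝ K hp)) hcx
        rw [← hfu p, ← hfu x, h0] at h1
        simp at h1
      · intro x' hx'
        have h1 : f x' < f x := lt_trans (hfc x' (subset_convexHull ℝ K hx')) hcx
        have : (inner ℝ (x' - x) u : ℝ) = f x' - f x := by
          rw [real_inner_comm, inner_sub_right, hfu, hfu]
        linarith [this]
  -- the ray x + t • u stays in the cell up to time t*, then must hit a neighbor
  set C := voronoiCell η x with hC
  have hxC : x ∈ C := by intro x' _; simp [dist_nonneg]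
  set T : Set ℝ := {t : ℝ | 0 ≤ t ∧ x + t • u ∈ C} with hT
  have hT0 : (0 : ℝ) ∈ T := ⟨le_refl 0, by simpa using hxC⟩
  have hTbdd : BddAbove T := by
    obtain ⟨R, hR⟩ := hbdd.subset_closedBall x
    refine ⟨R / ‖u‖, fun t ht => ?_⟩
    have h1 : dist (x + t • u) x ≤ R := hR ht.2
    have h2 : dist (x + t • u) x = t * ‖u‖ := by
      rw [dist_eq_norm]
      simp [norm_smul, Real.norm_eq_abs, abs_of_nonneg ht.1]
    rw [h2] at h1
    rw [le_div_iff₀ (norm_pos_iff.2 hu)]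
    exact h1
  have hTclosed : IsClosed T := by
    have : T = Set.Ici (0:ℝ) ∩ (fun t : ℝ => x + t • u) ⁻¹' C := rfl
    rw [this]
    exact isClosed_Ici.inter ((isClosed_voronoiCell η x).preimage
      (continuous_const.add (continuous_id.smul continuous_const)))
  set ts := sSup T with hts
  have htsT : ts ∈ T := hTclosed.csSup_mem ⟨0, hT0⟩ hTbdd
  have hts0 : 0 ≤ ts := htsT.1
  set zs := x + ts • u with hzs
  have hzsC : zs ∈ C := htsT.2
  -- finite set of candidate neighbors
  set F : Set (EuclideanSpace ℝ (Fin d)) := (η ∩ closedBall x (2 * (ts + 1) * ‖u‖)) \ {x} with hF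
  have hFfin : F.Finite := (hfin _).diff
  -- each t slightly beyond ts is closer to some point of F
  have hcover : Set.Ioc ts (ts + 1) ⊆ ⋃ x' ∈ F, {t : ℝ | dist (x + t • u) x' ≤ t * ‖u‖} := by
    intro t ht
    have htpos : 0 ≤ t := le_trans hts0 (le_of_lt ht.1)
    have htnotT : t ∉ T := fun h => absurd (le_csSup hTbdd h) (not_le.2 ht.1)
    have : ¬ (x + t • u ∈ C) := fun h => htnotT ⟨htpos, h⟩
    simp only [hC, voronoiCell, Set.mem_setOf_eq, not_forall] at this
    obtain ⟨x', hx'η, hx'lt⟩ := this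
    push_neg at hx'lt
    have hdzx : dist (x + t • u) x = t * ‖u‖ := by
      rw [dist_eq_norm]
      simp [norm_smul, Real.norm_eq_abs, abs_of_nonneg htpos]
    have hx'ne : x' ≠ x := by
      intro h; rw [h] at hx'lt; exact lt_irrefl _ hx'lt
    have hx'ball : x' ∈ closedBall x (2 * (ts + 1) * ‖u‖) := by
      rw [mem_closedBall, dist_comm]
      calc dist x x' ≤ dist x (x + t • u) + dist (x + t • u) x' := dist_triangle _ _ _
        _ ≤ t * ‖u‖ + t * ‖u‖ := by
            rw [dist_comm x (x + t • u), hdzx]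
            have := le_of_lt hx'lt
            rw [hdzx] at this
            linarith
        _ ≤ 2 * (ts + 1) * ‖u‖ := by
            have h1 : t ≤ ts + 1 := ht.2
            have h2 : (0:ℝ) ≤ ‖u‖ := norm_nonneg u
            nlinarith
    refine Set.mem_biUnion (show x' ∈ F from ⟨⟨hx'η, hx'ball⟩, hx'ne⟩) ?_
    rw [Set.mem_setOf_eq, ← hdzx]
    exact le_of_lt hx'lt
  -- the union is closed, hence contains ts
  have hUclosed : IsClosed (⋃ x' ∈ F, {t : ℝ | dist (x + t • u) x' ≤ t * ‖u‖}) := by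
    refine hFfin.isClosed_biUnion fun x' _ => ?_
    exact isClosed_le ((continuous_const.add (continuous_id.smul continuous_const)).dist
      continuous_const) (continuous_id.mul continuous_const)
  have htsU : ts ∈ ⋃ x' ∈ F, {t : ℝ | dist (x + t • u) x' ≤ t * ‖u‖} := by
    have h1 : ts ∈ closure (Set.Ioc ts (ts + 1)) := by
      rw [closure_Ioc (by linarith : ts ≠ ts + 1)]
      exact ⟨le_refl _, by linarith⟩
    have h2 := closure_mono hcover
    rw [hUclosed.closure_eq] at h2
    exact h2 h1
  obtain ⟨x', hx'F, hx'le⟩ := by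
    simpa only [Set.mem_iUnion, Set.mem_setOf_eq, exists_prop] using htsU
  obtain ⟨⟨hx'η, _⟩, hx'ne⟩ := hx'F
  have hdzx : dist zs x = ts * ‖u‖ := by
    rw [hzs, dist_eq_norm]
    simp [norm_smul, Real.norm_eq_abs, abs_of_nonneg hts0]
  -- x' is a Voronoi neighbor of x
  have hx'cell : zs ∈ voronoiCell η x' := by
    intro x'' hx''
    calc dist zs x' ≤ ts * ‖u‖ := hx'le
      _ = dist zs x := hdzx.symm
      _ ≤ dist zs x'' := hzsC x'' hx''
  have hx'K : x' ∈ K := ⟨⟨hx'η, hnb x' hx'η ⟨zs, hx'cell, hzsC⟩⟩, hx'ne⟩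
  -- contradiction with the separation
  have hsep' := hsep x' hx'K
  have h2 : ‖x + ts • u - x'‖ ^ 2
      = ‖x - x'‖ ^ 2 + 2 * (ts * (inner ℝ (x - x') u : ℝ)) + (ts * ‖u‖) ^ 2 := by
    have h : x + ts • u - x' = (x - x') + ts • u := by abel
    rw [h, norm_add_sq_real, real_inner_smul_right, norm_smul]
    rw [Real.norm_eq_abs, abs_of_nonneg hts0]
  have h3 : (inner ℝ (x - x') u : ℝ) > 0 := by
    have h : (inner ℝ (x - x') u : ℝ) = -(inner ℝ (x' - x) u : ℝ) := by
      rw [← inner_neg_left]; congr 1; abel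
    linarith
  have h4 : ‖x - x'‖ > 0 :=
    norm_pos_iff.2 (sub_ne_zero.2 (fun hh => hx'ne hh.symm))
  have h5 : ‖x + ts • u - x'‖ ≤ ts * ‖u‖ := by
    rw [← dist_eq_norm] at *
    exact hx'le
  nlinarith [norm_nonneg (x + ts • u - x'), mul_nonneg hts0 (norm_nonneg u)]

/-- If all Voronoi neighbors of `0` and of `y` (w.r.t. `χ ∪ {0,y}`) lie in `B(0,v)` and
`B(y,v)` respectively, all cells being bounded and the points in general position, then
`χ ∩ (B(0,v) ∪ B(y,v))` contains at least `d+1` points. -/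
theorem voronoi_neighbors_card {d : ℕ} (hd : 1 ≤ d)
    (χ : Set (EuclideanSpace ℝ (Fin d)))
    (hlf : ∀ r : ℝ, (χ ∩ closedBall 0 r).Finite)
    (y : EuclideanSpace ℝ (Fin d)) (hy : y ≠ 0) (v : ℝ) (hv : 0 ≤ v)
    (hgen : ∀ s : Finset (EuclideanSpace ℝ (Fin d)),
      ↑s ⊆ χ ∪ {0, y} → s.card ≤ d + 1 →
      AffineIndependent ℝ (fun p : s => (p : EuclideanSpace ℝ (Fin d))))
    (hbdd : ∀ x ∈ χ ∪ {0, y}, Bornology.IsBounded (voronoiCell (χ ∪ {0, y}) x))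
    (hnb0 : ∀ x' ∈ χ ∪ {0, y},
      (voronoiCell (χ ∪ {0, y}) x' ∩ voronoiCell (χ ∪ {0, y}) 0).Nonempty →
      x' ∈ closedBall (0 : EuclideanSpace ℝ (Fin d)) v)
    (hnby : ∀ x' ∈ χ ∪ {0, y},
      (voronoiCell (χ ∪ {0, y}) x' ∩ voronoiCell (χ ∪ {0, y}) y).Nonempty →
      x' ∈ closedBall y v) :
    d + 1 ≤ (χ ∩ (closedBall 0 v ∪ closedBall y v)).ncard := by
  classical
  set η : Set (EuclideanSpace ℝ (Fin d)) := χ ∪ {0, y} with hη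
  have h0mem : (0 : EuclideanSpace ℝ (Fin d)) ∈ η := Or.inr (by simp)
  have hymem : y ∈ η := Or.inr (by simp)
  have hpairfin : ({0, y} : Set (EuclideanSpace ℝ (Fin d))).Finite :=
    (Set.finite_singleton y).insert 0
  have hfin0 : ∀ r : ℝ, (η ∩ closedBall 0 r).Finite := by
    intro r
    refine Set.Finite.subset ((hlf r).union hpairfin) ?_
    rintro z ⟨hz1, hz2⟩
    rcases hz1 with hz | hz
    · exact Or.inl ⟨hz, hz2⟩
    · exact Or.inr hz
  have hfiny : ∀ r : ℝ, (η ∩ closedBall y r).Finite := by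
    intro r
    refine Set.Finite.subset ((hlf (r + ‖y‖)).union hpairfin) ?_
    rintro z ⟨hz1, hz2⟩
    rcases hz1 with hz | hz
    · refine Or.inl ⟨hz, ?_⟩
      rw [mem_closedBall_zero_iff]
      calc ‖z‖ = ‖(z - y) + y‖ := by rw [sub_add_cancel]
        _ ≤ ‖z - y‖ + ‖y‖ := norm_add_le _ _
        _ ≤ r + ‖y‖ := by
            have : dist z y ≤ r := hz2
            rw [dist_eq_norm] at this
            linarith
    · exact Or.inr hz
  have h0conv := key hd η 0 h0mem hfin0 (hbdd 0 h0mem) v hnb0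
  have hyconv := key hd η y hymem hfiny (hbdd y hymem) v hnby
  set χ₀ : Set (EuclideanSpace ℝ (Fin d)) := χ ∩ (closedBall 0 v ∪ closedBall y v) with hχ₀
  have hχ₀fin : χ₀.Finite := by
    refine Set.Finite.subset (hlf (v + ‖y‖)) ?_
    rintro z ⟨hz1, hz2⟩
    refine ⟨hz1, ?_⟩
    rcases hz2 with hz | hz
    · rw [mem_closedBall_zero_iff] at hz ⊢
      linarith [norm_nonneg y]
    · rw [mem_closedBall_zero_iff]
      have : dist z y ≤ v := hz
      rw [dist_eq_norm] at this
      calc ‖z‖ = ‖(z - y) + y‖ := by rw [sub_add_cancel]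
        _ ≤ ‖z - y‖ + ‖y‖ := norm_add_le _ _
        _ ≤ v + ‖y‖ := by linarith
  by_contra hcon
  push_neg at hcon
  have hcard : χ₀.ncard ≤ d := Nat.lt_succ_iff.1 hcon
  set Afin : Finset (EuclideanSpace ℝ (Fin d)) := hχ₀fin.toFinset \ {0, y} with hAfin
  have hAsub : ↑Afin ⊆ χ₀ := by
    intro z hz
    rw [hAfin] at hz
    simp only [Finset.coe_sdiff, Set.mem_diff, Set.Finite.coe_toFinset] at hz
    exact hz.1
  have hAne0 : ∀ p ∈ Afin, p ≠ (0 : EuclideanSpace ℝ (Fin d)) := by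
    intro p hp
    rw [hAfin, Finset.mem_sdiff] at hp
    intro h; exact hp.2 (by simp [h])
  have hAney : ∀ p ∈ Afin, p ≠ y := by
    intro p hp
    rw [hAfin, Finset.mem_sdiff] at hp
    intro h; exact hp.2 (by simp [h])
  have h0A : (0 : EuclideanSpace ℝ (Fin d)) ∉ Afin := fun h => hAne0 0 h rfl
  have hyA : y ∉ Afin := fun h => hAney y h rfl
  have hAcard : Afin.card ≤ d := by
    calc Afin.card ≤ hχ₀fin.toFinset.card := Finset.card_le_card (Finset.sdiff_subset)
      _ = χ₀.ncard := (Set.ncard_eq_toFinset_card χ₀ hχ₀fin).symm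
      _ ≤ d := hcard
  -- 0 is a convex combination of insert y Afin
  have hsub0 : (η ∩ closedBall 0 v) \ {0} ⊆ ↑(insert y Afin) := by
    rintro z ⟨⟨hz1, hz2⟩, hz3⟩
    simp only [Set.mem_singleton_iff] at hz3
    simp only [Finset.coe_insert, Set.mem_insert_iff]
    by_cases hzy : z = y
    · exact Or.inl hzy
    · refine Or.inr ?_
      rcases hz1 with hz | hz
      · rw [hAfin, Finset.mem_coe, Finset.mem_sdiff]
        constructor
        · rw [Set.Finite.mem_toFinset]; exact ⟨hz, Or.inl hz2⟩
        · simp [hz3, hzy]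
      · rcases hz with h | h
        · exact absurd h hz3
        · exact absurd h hzy
  have hsuby : (η ∩ closedBall y v) \ {y} ⊆ ↑(insert (0 : EuclideanSpace ℝ (Fin d)) Afin) := by
    rintro z ⟨⟨hz1, hz2⟩, hz3⟩
    simp only [Set.mem_singleton_iff] at hz3
    simp only [Finset.coe_insert, Set.mem_insert_iff]
    by_cases hz0 : z = 0
    · exact Or.inl hz0
    · refine Or.inr ?_
      rcases hz1 with hz | hz
      · rw [hAfin, Finset.mem_coe, Finset.mem_sdiff]
        constructor
        · rw [Set.Finite.mem_toFinset]; exact ⟨hz, Or.inr hz2⟩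
        · simp [hz3, hz0]
      · rcases hz with h | h
        · exact absurd h hz0
        · exact absurd h hz3
  have h0c : (0 : EuclideanSpace ℝ (Fin d)) ∈ convexHull ℝ ↑(insert y Afin) :=
    convexHull_mono hsub0 h0conv
  have hyc : y ∈ convexHull ℝ ↑(insert (0 : EuclideanSpace ℝ (Fin d)) Afin) :=
    convexHull_mono hsuby hyconv
  rw [Finset.convexHull_eq] at h0c hyc
  obtain ⟨a, ha0, hasum, hacm⟩ := h0c
  obtain ⟨b, hb0, hbsum, hbcm⟩ := hyc
  rw [Finset.centerMass_eq_of_sum_1 _ _ hasum] at hacm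
  rw [Finset.centerMass_eq_of_sum_1 _ _ hbsum] at hbcm
  simp only [id_eq] at hacm hbcm
  rw [Finset.sum_insert hyA] at hacm hasum
  rw [Finset.sum_insert h0A] at hbcm hbsum
  rw [smul_zero, zero_add] at hbcm
  set α := a y with hα
  set β := b (0 : EuclideanSpace ℝ (Fin d)) with hβ
  have hα0 : 0 ≤ α := ha0 y (Finset.mem_insert_self _ _)
  have hβ0 : 0 ≤ β := hb0 0 (Finset.mem_insert_self _ _)
  have haA : ∀ p ∈ Afin, 0 ≤ a p := fun p hp => ha0 p (Finset.mem_insert_of_mem hp)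
  have hbA : ∀ p ∈ Afin, 0 ≤ b p := fun p hp => hb0 p (Finset.mem_insert_of_mem hp)
  have hα1 : α < 1 := by
    by_contra h
    push_neg at h
    have hsumA : ∑ p ∈ Afin, a p = 0 := by
      have h1 : (0:ℝ) ≤ ∑ p ∈ Afin, a p := Finset.sum_nonneg haA
      linarith
    have hz : ∀ p ∈ Afin, a p = 0 := (Finset.sum_eq_zero_iff_of_nonneg haA).1 hsumA
    have h2 : ∑ p ∈ Afin, a p • p = (0 : EuclideanSpace ℝ (Fin d)) :=
      Finset.sum_eq_zero fun p hp => by rw [hz p hp, zero_smul]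
    rw [h2, add_zero] at hacm
    rcases smul_eq_zero.1 hacm with h3 | h3
    · rw [hα] at h3; linarith
    · exact hy h3
  have hβ1 : β < 1 := by
    by_contra h
    push_neg at h
    have hsumA : ∑ p ∈ Afin, b p = 0 := by
      have h1 : (0:ℝ) ≤ ∑ p ∈ Afin, b p := Finset.sum_nonneg hbA
      linarith
    have hz : ∀ p ∈ Afin, b p = 0 := (Finset.sum_eq_zero_iff_of_nonneg hbA).1 hsumA
    have h2 : ∑ p ∈ Afin, b p • p = (0 : EuclideanSpace ℝ (Fin d)) :=
      Finset.sum_eq_zero fun p hp => by rw [hz p hp, zero_smul]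
    rw [h2] at hbcm
    exact hy hbcm.symm
  have hσ : 0 < 1 - α * β := by nlinarith
  -- combined convex combination: 0 = ∑ (a p + α * b p) • p over Afin
  have hcomb : ∑ p ∈ Afin, (a p + α * b p) • p = (0 : EuclideanSpace ℝ (Fin d)) := by
    have h1 : ∑ p ∈ Afin, (a p + α * b p) • p
        = ∑ p ∈ Afin, a p • p + α • ∑ p ∈ Afin, b p • p := by
      rw [Finset.smul_sum, ← Finset.sum_add_distrib]
      congr 1
      ext p
      rw [add_smul, smul_smul]
    rw [h1, hbcm]
    have h2 : ∑ p ∈ Afin, a p • p = -(α • y) := by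
      have := hacm
      linear_combination (norm := module) this
    rw [h2]
    abel
  have hcombsum : ∑ p ∈ Afin, (a p + α * b p) = 1 - α * β := by
    rw [Finset.sum_add_distrib, ← Finset.mul_sum]
    have h1 : ∑ p ∈ Afin, a p = 1 - α := by linarith
    have h2 : ∑ p ∈ Afin, b p = 1 - β := by linarith
    rw [h1, h2]; ring
  -- contradiction with affine independence of insert 0 Afin
  set s : Finset (EuclideanSpace ℝ (Fin d)) := insert (0 : EuclideanSpace ℝ (Fin d)) Afin with hs
  have hssub : ↑s ⊆ χ ∪ {0, y} := by
    intro z hz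
    rw [hs, Finset.coe_insert, Set.mem_insert_iff] at hz
    rcases hz with h | h
    · exact Or.inr (by simp [h])
    · exact Or.inl (hAsub h).1
  have hscard : s.card ≤ d + 1 := by
    rw [hs, Finset.card_insert_of_notMem h0A]
    omega
  have hindep := hgen s hssub hscard
  set w : EuclideanSpace ℝ (Fin d) → ℝ :=
    fun p => if p = 0 then -(1 - α * β) else a p + α * b p with hw
  have hwsum : ∑ p ∈ s, w p = 0 := by
    rw [hs, Finset.sum_insert h0A]
    have h1 : w 0 = -(1 - α * β) := by rw [hw]; simp
    have h2 : ∑ p ∈ Afin, w p = ∑ p ∈ Afin, (a p + α * b p) :=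
      Finset.sum_congr rfl fun p hp => by rw [hw]; simp [hAne0 p hp]
    rw [h1, h2, hcombsum]; ring
  have hwvec : ∑ p ∈ s, w p • p = (0 : EuclideanSpace ℝ (Fin d)) := by
    rw [hs, Finset.sum_insert h0A]
    have h2 : ∑ p ∈ Afin, w p • p = ∑ p ∈ Afin, (a p + α * b p) • p :=
      Finset.sum_congr rfl fun p hp => by rw [hw]; simp [hAne0 p hp]
    rw [h2, hcomb, smul_zero, zero_add]
  have h0s : (0 : EuclideanSpace ℝ (Fin d)) ∈ s := Finset.mem_insert_self _ _
  have := affineIndependent_iff.1 hindep Finset.univ (fun p => w ↑p) ?_ ?_ ⟨0, h0s⟩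
    (Finset.mem_univ _)
  · simp only [hw, if_true, eq_self_iff_true] at this
    linarith
  · rw [Finset.sum_coe_sort s w]
    exact hwsum
  · rw [Finset.sum_coe_sort s (fun p => w p • p)]
    exact hwvec
end

section
/- Let Δ(x₁,x₂,y₃) be a triangle in ℝ² with two vertices x₁ = r u₁, x₂ = r u₂ on the sphere of radius r (u₁,u₂ ∈ S¹, u₁ ≠ u₂). If the area of the triangle is less than v and its circumradius is at most r, then y₃ lies in the intersection of the ball B(0, 3r) and the strip of points at distance at most 2v/(r·|u₁ − u₂|) from the line through x₁ and x₂; consequently the set of admissible y₃ has Lebesgue measure at most 24·v/|u₁ − u₂|. -/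
open Real MeasureTheory Metric Pointwise

lemma combo_mem_hull3 {V : Type*} [AddCommGroup V] [Module ℝ V] (A B : V) {a b : ℝ}
    (ha : 0 ≤ a) (hb : 0 ≤ b) (hab : a + b ≤ 1) :
    a • A + b • B ∈ convexHull ℝ ({0, A, B} : Set V) := by
  have hs1 : ∑ i : Fin 3, ![1 - a - b, a, b] i = 1 := by
    simp [Fin.sum_univ_three]; ring
  have h := Finset.centerMass_mem_convexHull (Finset.univ : Finset (Fin 3))
    (w := ![1 - a - b, a, b]) (z := ![0, A, B]) (s := ({0, A, B} : Set V)) ?_ ?_ ?_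
  · rw [Finset.centerMass_eq_of_sum_1 _ _ hs1, Fin.sum_univ_three] at h
    simpa using h
  · intro i _; fin_cases i <;> simp [ha, hb] <;> linarith
  · rw [hs1]; norm_num
  · intro i _; fin_cases i <;> simp [Set.mem_insert_iff]

lemma std_triangle_vol :
    ENNReal.ofReal (1/2) ≤ volume (convexHull ℝ
      ({0, EuclideanSpace.single 0 1, EuclideanSpace.single 1 1} :
        Set (EuclideanSpace ℝ (Fin 2)))) := by
  set ε₀ : EuclideanSpace ℝ (Fin 2) := EuclideanSpace.single 0 1
  set ε₁ : EuclideanSpace ℝ (Fin 2) := EuclideanSpace.single 1 1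
  set ψ : EuclideanSpace ℝ (Fin 2) ≃ᵐ ℝ × ℝ :=
    (MeasurableEquiv.toLp 2 (Fin 2 → ℝ)).symm.trans MeasurableEquiv.finTwoArrow with hψdef
  have hψ : MeasurePreserving ψ volume volume :=
    (volume_preserving_finTwoArrow ℝ).comp
      (EuclideanSpace.volume_preserving_symm_measurableEquiv_toLp (Fin 2))
  set R : Set (ℝ × ℝ) := regionBetween (fun _ => (0:ℝ)) (fun x => 1 - x) (Set.Ioo 0 1) with hR
  have hRmeas : MeasurableSet R :=
    measurableSet_regionBetween measurable_const (by fun_prop) measurableSet_Ioo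
  have happ : ∀ y : EuclideanSpace ℝ (Fin 2), ψ y = (y 0, y 1) := fun y => rfl
  have hsub : ψ ⁻¹' R ⊆ convexHull ℝ ({0, ε₀, ε₁} : Set (EuclideanSpace ℝ (Fin 2))) := by
    intro y hy
    simp only [Set.mem_preimage, hR, regionBetween, Set.mem_setOf_eq, happ, Set.mem_Ioo] at hy
    obtain ⟨⟨h1, h2⟩, h3, h4⟩ := hy
    have hy' : y = y 0 • ε₀ + y 1 • ε₁ := by
      ext i
      fin_cases i <;>
        simp [ε₀, ε₁, EuclideanSpace.single_apply, PiLp.add_apply, PiLp.smul_apply]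
    rw [hy']
    exact combo_mem_hull3 ε₀ ε₁ h1.le h3.le (by linarith)
  have hRvol : volume R = ENNReal.ofReal (1/2) := by
    rw [hR, Measure.volume_eq_prod, volume_regionBetween_eq_integral]
    · have h2 : ∫ x in Set.Ioo (0:ℝ) 1, ((fun x : ℝ => 1 - x) - (fun _ : ℝ => (0:ℝ))) x = 1/2 := by
        simp only [Pi.sub_apply, sub_zero]
        rw [← integral_Ioc_eq_integral_Ioo,
          ← intervalIntegral.integral_of_le (by norm_num : (0:ℝ) ≤ 1)]
        rw [intervalIntegral.integral_sub (intervalIntegrable_const (c := (1:ℝ)))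
          intervalIntegral.intervalIntegrable_id]
        simp [integral_id]
        norm_num
      rw [h2]
    · exact (integrableOn_const measure_Ioo_lt_top.ne)
    · exact ((by fun_prop : Continuous fun x:ℝ => 1 - x).continuousOn.integrableOn_compact isCompact_Icc).mono_set Set.Ioo_subset_Icc_self
    · exact measurableSet_Ioo
    · intro x hx
      simp at hx ⊢
      linarith [hx.2]
  calc ENNReal.ofReal (1/2) = volume R := hRvol.symm
    _ = volume (ψ ⁻¹' R) := (hψ.measure_preimage hRmeas.nullMeasurableSet).symm
    _ ≤ _ := measure_mono hsub

lemma hull3_vol_lb (p q : EuclideanSpace ℝ (Fin 2)) :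
    ENNReal.ofReal (|p 0 * q 1 - q 0 * p 1| / 2) ≤
      volume (convexHull ℝ ({0, p, q} : Set (EuclideanSpace ℝ (Fin 2)))) := by
  set ε₀ : EuclideanSpace ℝ (Fin 2) := EuclideanSpace.single 0 1 with hε₀
  set ε₁ : EuclideanSpace ℝ (Fin 2) := EuclideanSpace.single 1 1 with hε₁
  set M : EuclideanSpace ℝ (Fin 2) →ₗ[ℝ] EuclideanSpace ℝ (Fin 2) :=
    (EuclideanSpace.projₗ 0).smulRight p + (EuclideanSpace.projₗ 1).smulRight q with hM
  have hM0 : M ε₀ = p := by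
    simp [hM, hε₀, LinearMap.smulRight_apply, EuclideanSpace.single_apply]
  have hM1 : M ε₁ = q := by
    simp [hM, hε₁, LinearMap.smulRight_apply, EuclideanSpace.single_apply]
  have hMdet : LinearMap.det M = p 0 * q 1 - q 0 * p 1 := by
    have hb := EuclideanSpace.basisFun (Fin 2) ℝ
    rw [← LinearMap.det_toMatrix (EuclideanSpace.basisFun (Fin 2) ℝ).toBasis M,
      Matrix.det_fin_two]
    have h00 : ∀ i j : Fin 2, LinearMap.toMatrix (EuclideanSpace.basisFun (Fin 2) ℝ).toBasis
        (EuclideanSpace.basisFun (Fin 2) ℝ).toBasis M i j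
        = M ((EuclideanSpace.basisFun (Fin 2) ℝ) j) i := by
      intro i j
      rw [LinearMap.toMatrix_apply]
      simp [OrthonormalBasis.coe_toBasis, OrthonormalBasis.coe_toBasis_repr_apply,
        EuclideanSpace.basisFun_repr]
    rw [h00, h00, h00, h00]
    rw [EuclideanSpace.basisFun_apply, EuclideanSpace.basisFun_apply, ← hε₀, ← hε₁,
      hM0, hM1]
  have himg : M '' (convexHull ℝ ({0, ε₀, ε₁} : Set (EuclideanSpace ℝ (Fin 2))))
      = convexHull ℝ ({0, p, q} : Set (EuclideanSpace ℝ (Fin 2))) := by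
    rw [LinearMap.image_convexHull]
    congr 1
    simp [Set.image_insert_eq, hM0, hM1]
  calc ENNReal.ofReal (|p 0 * q 1 - q 0 * p 1| / 2)
      = ENNReal.ofReal |LinearMap.det M| * ENNReal.ofReal (1/2) := by
        rw [← ENNReal.ofReal_mul (abs_nonneg _), hMdet]; ring_nf
    _ ≤ ENNReal.ofReal |LinearMap.det M| * volume (convexHull ℝ
          ({0, ε₀, ε₁} : Set (EuclideanSpace ℝ (Fin 2)))) := by
        exact mul_le_mul_right std_triangle_vol _
    _ = volume (M '' (convexHull ℝ ({0, ε₀, ε₁} : Set (EuclideanSpace ℝ (Fin 2))))) :=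
        (Measure.addHaar_image_linearMap volume M _).symm
    _ = _ := by rw [himg]

/-- The set of admissible third vertices `y₃` of a triangle with two vertices `r•u₁, r•u₂`
on the sphere of radius `r`, area less than `v` and circumradius at most `r`. -/
def admissibleThirdVertex (r v : ℝ) (u₁ u₂ : EuclideanSpace ℝ (Fin 2)) :
    Set (EuclideanSpace ℝ (Fin 2)) :=
  {y₃ | (volume (convexHull ℝ ({r • u₁, r • u₂, y₃} : Set (EuclideanSpace ℝ (Fin 2))))).toReal < v ∧
    ∃ z : EuclideanSpace ℝ (Fin 2), ∃ ρ : ℝ, ρ ≤ r ∧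
      dist (r • u₁) z = ρ ∧ dist (r • u₂) z = ρ ∧ dist y₃ z = ρ}

set_option maxHeartbeats 1000000 in
theorem third_vertex_localization (r v : ℝ) (hr : 0 < r) (hv : 0 < v)
    (u₁ u₂ : EuclideanSpace ℝ (Fin 2)) (hu₁ : ‖u₁‖ = 1) (hu₂ : ‖u₂‖ = 1) (hne : u₁ ≠ u₂) :
    (∀ y₃ ∈ admissibleThirdVertex r v u₁ u₂,
      y₃ ∈ closedBall (0 : EuclideanSpace ℝ (Fin 2)) (3 * r) ∧
      Metric.infDist y₃
          ↑(affineSpan ℝ ({r • u₁, r • u₂} : Set (EuclideanSpace ℝ (Fin 2))))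
        ≤ 2 * v / (r * dist u₁ u₂)) ∧
    volume (admissibleThirdVertex r v u₁ u₂) ≤ ENNReal.ofReal (24 * v / dist u₁ u₂) := by
  have hd : 0 < dist u₁ u₂ := dist_pos.2 hne
  set d := dist u₁ u₂ with hdd
  set x₁ : EuclideanSpace ℝ (Fin 2) := r • u₁ with hx₁
  set x₂ : EuclideanSpace ℝ (Fin 2) := r • u₂ with hx₂
  have hbb : ‖x₂ - x₁‖ = r * d := by
    rw [hx₁, hx₂, ← smul_sub, norm_smul, Real.norm_eq_abs, abs_of_pos hr,
      show ‖u₂ - u₁‖ = dist u₂ u₁ from (dist_eq_norm _ _).symm, dist_comm]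
  have hbbpos : 0 < r * d := mul_pos hr hd
  set e₁ : EuclideanSpace ℝ (Fin 2) := (r * d)⁻¹ • (x₂ - x₁) with he₁def
  have hx21 : x₂ - x₁ = (r * d) • e₁ := by
    rw [he₁def, smul_inv_smul₀ hbbpos.ne']
  have he₁ : ‖e₁‖ = 1 := by
    rw [he₁def, norm_smul, hbb, Real.norm_eq_abs, abs_of_pos (inv_pos.2 hbbpos),
      inv_mul_cancel₀ hbbpos.ne']
  -- orthonormal basis with b 0 = e₁
  obtain ⟨b, hb0⟩ : ∃ b : OrthonormalBasis (Fin 2) ℝ (EuclideanSpace ℝ (Fin 2)), b 0 = e₁ := by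
    have card : Module.finrank ℝ (EuclideanSpace ℝ (Fin 2)) = Fintype.card (Fin 2) := by
      simp
    have horth : Orthonormal ℝ (({0} : Set (Fin 2)).restrict ![e₁, e₁]) := by
      constructor
      · rintro ⟨i, hi⟩
        simp only [Set.mem_singleton_iff] at hi
        subst hi
        exact he₁
      · rintro ⟨i, hi⟩ ⟨j, hj⟩ hij
        simp only [Set.mem_singleton_iff] at hi hj
        exact absurd (Subtype.ext (hi.trans hj.symm)) hij
    obtain ⟨b, hb⟩ := horth.exists_orthonormalBasis_extension_of_card_eq card
    exact ⟨b, by simpa using hb 0 rfl⟩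
  have hrepr_e₁ : b.repr e₁ = EuclideanSpace.single 0 1 := by
    rw [← hb0]; exact b.repr_self 0
  have hp : b.repr (x₂ - x₁) = (r * d) • EuclideanSpace.single 0 (1:ℝ) := by
    rw [hx21, _root_.map_smul, hrepr_e₁]
  have hL1 : ∀ p ∈ (affineSpan ℝ ({x₁, x₂} : Set (EuclideanSpace ℝ (Fin 2))) :
      Set (EuclideanSpace ℝ (Fin 2))), b.repr p 1 = b.repr x₁ 1 := by
    intro p hp'
    have hmem : p -ᵥ x₁ ∈ (affineSpan ℝ ({x₁, x₂} : Set (EuclideanSpace ℝ (Fin 2)))).direction :=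
      AffineSubspace.vsub_mem_direction hp' (left_mem_affineSpan_pair ℝ x₁ x₂)
    rw [direction_affineSpan, mem_vectorSpan_pair_rev] at hmem
    obtain ⟨t, ht⟩ := hmem
    have hpt : p = t • (x₂ - x₁) + x₁ := by
      rw [show (x₂ -ᵥ x₁) = x₂ - x₁ from rfl, show (p -ᵥ x₁) = p - x₁ from rfl] at ht
      rw [ht, sub_add_cancel]
    rw [hpt, map_add, _root_.map_smul, hp]
    simp [EuclideanSpace.single_apply]
  -- key bound
  have key : ∀ y₃ ∈ admissibleThirdVertex r v u₁ u₂,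
      ‖y₃‖ ≤ 3 * r ∧ |b.repr y₃ 1 - b.repr x₁ 1| ≤ 2 * v / (r * d) := by
    intro y₃ hy
    rw [admissibleThirdVertex, Set.mem_setOf_eq] at hy
    obtain ⟨harea, z, ρ, hρr, h1, h2, h3⟩ := hy
    have hρ0 : 0 ≤ ρ := h1 ▸ dist_nonneg
    have hball : ‖y₃‖ ≤ 3 * r := by
      have hx₁norm : ‖x₁‖ = r := by
        rw [hx₁, norm_smul, Real.norm_eq_abs, abs_of_pos hr, hu₁, mul_one]
      calc ‖y₃‖ = dist y₃ 0 := (dist_zero_right y₃).symm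
        _ ≤ dist y₃ z + dist z x₁ + dist x₁ 0 := dist_triangle4 y₃ z x₁ 0
        _ = ρ + ρ + r := by rw [h3, dist_comm z x₁, h1, dist_zero_right, hx₁norm]
        _ ≤ 3 * r := by linarith
    refine ⟨hball, ?_⟩
    -- area lower bound
    set q : EuclideanSpace ℝ (Fin 2) := b.repr (y₃ - x₁) with hq
    have htrans : ({x₁, x₂, y₃} : Set (EuclideanSpace ℝ (Fin 2)))
        = x₁ +ᵥ ({0, x₂ - x₁, y₃ - x₁} : Set (EuclideanSpace ℝ (Fin 2))) := by
      ext w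
      simp only [Set.mem_insert_iff, Set.mem_singleton_iff,
        Set.mem_vadd_set_iff_neg_vadd_mem, vadd_eq_add, neg_add_eq_sub, sub_eq_zero,
        sub_left_inj]
    have hS0fin : ({0, x₂ - x₁, y₃ - x₁} : Set (EuclideanSpace ℝ (Fin 2))).Finite :=
      Set.toFinite _
    have hS0meas : MeasurableSet (convexHull ℝ
        ({0, x₂ - x₁, y₃ - x₁} : Set (EuclideanSpace ℝ (Fin 2)))) :=
      (hS0fin.isCompact_convexHull ℝ).isClosed.measurableSet
    have himg : ⇑(b.repr) '' (convexHull ℝ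
          ({0, x₂ - x₁, y₃ - x₁} : Set (EuclideanSpace ℝ (Fin 2))))
        = convexHull ℝ ({0, b.repr (x₂ - x₁), q} :
          Set (EuclideanSpace ℝ (Fin 2))) := by
      have := (b.repr.toLinearEquiv.toLinearMap).image_convexHull
        ({0, x₂ - x₁, y₃ - x₁} : Set (EuclideanSpace ℝ (Fin 2)))
      rw [show ⇑(b.repr.toLinearEquiv.toLinearMap) = ⇑(b.repr) from rfl] at this
      rw [this]
      congr 1
      rw [Set.image_insert_eq, Set.image_insert_eq, Set.image_singleton, map_zero, hq]
    have hvol_eq : volume (convexHull ℝ ({x₁, x₂, y₃} : Set (EuclideanSpace ℝ (Fin 2))))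
        = volume (convexHull ℝ ({0, b.repr (x₂ - x₁), q} :
          Set (EuclideanSpace ℝ (Fin 2)))) := by
      rw [htrans, convexHull_vadd, measure_vadd, ← himg]
      have hpre : ⇑(b.repr) '' (convexHull ℝ
            ({0, x₂ - x₁, y₃ - x₁} : Set (EuclideanSpace ℝ (Fin 2))))
          = ⇑(b.repr.symm) ⁻¹' (convexHull ℝ
            ({0, x₂ - x₁, y₃ - x₁} : Set (EuclideanSpace ℝ (Fin 2)))) := by
        ext w
        constructor
        · rintro ⟨a, ha, rfl⟩
          simpa using ha
        · intro hw
          exact ⟨b.repr.symm w, hw, by simp⟩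
      rw [hpre, b.measurePreserving_repr_symm.measure_preimage hS0meas.nullMeasurableSet]
    have hlb := hull3_vol_lb (b.repr (x₂ - x₁)) q
    have hp0 : b.repr (x₂ - x₁) 0 = r * d := by
      rw [hp]; simp [EuclideanSpace.single_apply]
    have hp1 : b.repr (x₂ - x₁) 1 = 0 := by
      rw [hp]; simp [EuclideanSpace.single_apply]
    rw [hp0, hp1, ← hvol_eq] at hlb
    have hfin : volume (convexHull ℝ ({x₁, x₂, y₃} : Set (EuclideanSpace ℝ (Fin 2)))) ≠ ⊤ :=
      ((Set.toFinite _).isCompact_convexHull ℝ).measure_lt_top.ne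
    have hle : |r * d * q 1 - q 0 * 0| / 2
        ≤ (volume (convexHull ℝ ({x₁, x₂, y₃} : Set (EuclideanSpace ℝ (Fin 2))))).toReal :=
      (ENNReal.ofReal_le_iff_le_toReal hfin).mp hlb
    rw [mul_zero, sub_zero, abs_mul, abs_of_pos hbbpos] at hle
    have harea' : (volume (convexHull ℝ
        ({x₁, x₂, y₃} : Set (EuclideanSpace ℝ (Fin 2))))).toReal < v := harea
    have hq1 : |q 1| ≤ 2 * v / (r * d) := by
      rw [le_div_iff₀ hbbpos]
      nlinarith [hle, harea']
    have hq1' : q 1 = b.repr y₃ 1 - b.repr x₁ 1 := by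
      rw [hq, _root_.map_sub]; rfl
    rwa [hq1'] at hq1
  constructor
  · -- part 1
    intro y₃ hy
    obtain ⟨hball, hcoord⟩ := key y₃ hy
    refine ⟨by simpa [mem_closedBall, dist_zero_right] using hball, ?_⟩
    set q : EuclideanSpace ℝ (Fin 2) := b.repr (y₃ - x₁) with hq
    have hq1 : |q 1| ≤ 2 * v / (r * d) := by
      have hq1' : q 1 = b.repr y₃ 1 - b.repr x₁ 1 := by
        rw [hq, _root_.map_sub]; rfl
      rw [hq1']; exact hcoord
    -- foot point
    set foot : EuclideanSpace ℝ (Fin 2) := AffineMap.lineMap x₁ x₂ (q 0 / (r * d)) with hfoot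
    have hfootmem : foot ∈ (affineSpan ℝ ({x₁, x₂} : Set (EuclideanSpace ℝ (Fin 2))) :
        Set (EuclideanSpace ℝ (Fin 2))) :=
      AffineMap.lineMap_mem_affineSpan_pair _ _ _
    have hdistfoot : dist y₃ foot = |q 1| := by
      have hdiff : y₃ - foot = (y₃ - x₁) - (q 0) • e₁ := by
        rw [hfoot, AffineMap.lineMap_apply_module']
        rw [hx21, smul_smul, div_mul_cancel₀ _ hbbpos.ne']
        abel
      rw [dist_eq_norm, ← b.repr.norm_map (y₃ - foot)]
      rw [hdiff, _root_.map_sub, _root_.map_smul, hrepr_e₁, ← hq]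
      rw [EuclideanSpace.norm_eq]
      rw [Fin.sum_univ_two]
      simp only [PiLp.sub_apply, PiLp.smul_apply, EuclideanSpace.single_apply, smul_eq_mul]
      norm_num
      rw [Real.sqrt_sq_eq_abs]
    exact le_trans (infDist_le_dist_of_mem hfootmem) (le_of_eq_of_le hdistfoot hq1)
  · -- part 2
    set w : ℝ := 2 * v / (r * d) with hw
    have hwpos : 0 < w := by positivity
    set c : ℝ := b.repr x₁ 1 with hc
    set Ψ : EuclideanSpace ℝ (Fin 2) ≃ᵐ ℝ × ℝ :=
      (MeasurableEquiv.toLp 2 (Fin 2 → ℝ)).symm.trans MeasurableEquiv.finTwoArrow with hΨdef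
    have hΨ : MeasurePreserving Ψ volume volume :=
      (volume_preserving_finTwoArrow ℝ).comp
        (EuclideanSpace.volume_preserving_symm_measurableEquiv_toLp (Fin 2))
    have hF : MeasurePreserving (fun y => Ψ (b.repr y)) volume volume :=
      hΨ.comp b.measurePreserving_repr
    have happ : ∀ y : EuclideanSpace ℝ (Fin 2), Ψ (b.repr y) = (b.repr y 0, b.repr y 1) :=
      fun y => rfl
    have hsub : admissibleThirdVertex r v u₁ u₂ ⊆ (fun y => Ψ (b.repr y)) ⁻¹'
        (Set.Icc (-(3*r)) (3*r) ×ˢ Set.Icc (c - w) (c + w)) := by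
      intro y₃ hy
      obtain ⟨hball, hcoord⟩ := key y₃ hy
      simp only [Set.mem_preimage, happ, Set.mem_prod, Set.mem_Icc]
      constructor
      · have h0 := abs_real_inner_le_norm (b 0) y₃
        rw [show ‖b 0‖ = 1 from b.orthonormal.1 0, one_mul] at h0
        have h1 : |b.repr y₃ 0| ≤ ‖y₃‖ := by
          rw [b.repr_apply_apply]; exact h0
        rw [abs_le] at h1
        exact ⟨by linarith [h1.1], by linarith [h1.2]⟩
      · rw [abs_le] at hcoord
        exact ⟨by linarith [hcoord.1], by linarith [hcoord.2]⟩
    calc volume (admissibleThirdVertex r v u₁ u₂)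
        ≤ volume ((fun y => Ψ (b.repr y)) ⁻¹'
          (Set.Icc (-(3*r)) (3*r) ×ˢ Set.Icc (c - w) (c + w))) := measure_mono hsub
      _ = volume (Set.Icc (-(3*r)) (3*r) ×ˢ Set.Icc (c - w) (c + w)) :=
          hF.measure_preimage ((measurableSet_Icc.prod measurableSet_Icc).nullMeasurableSet)
      _ = ENNReal.ofReal (24 * v / d) := by
          rw [Measure.volume_eq_prod, Measure.prod_prod, Real.volume_Icc, Real.volume_Icc]
          rw [← ENNReal.ofReal_mul (by linarith)]
          congr 1
          have : (3*r - -(3*r)) * (c + w - (c - w)) = 6 * r * (2 * w) := by ring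
          rw [this, hw]
          field_simp
          ring
end
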